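/- arXiv:0712.3748 — 7 statements merged into one kernel-verified Lean document; each statement's English description precedes it below -/
import Mathlib

section
/- Let S be a commutative ring and S̃ = S[X]/(m(X)) an extension S(y) generated by an element y with monic minimal polynomial m(X) ∈ S[X] such that m'(y) is invertible in S̃. Then S̃ is formally étale over S: for every surjective ring homomorphism h : T → T̃ with nilpotent kernel, and homomorphisms v : S → T and ṽ : S̃ → T̃ with ṽ ∘ g = h ∘ v (where g : S → S̃ is the structure map), there exists a unique homomorphism u : S̃ → T with u ∘ g = v and h ∘ u = ṽ. -/
/-- Let `S` be a commutative ring and `S̃ = S[X]/(m)` the extension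
generated by a root `y` of a monic polynomial `m` such that `m'(y)` is invertible in `S̃`.
Then `S̃` is formally étale over `S`: unique lifting against surjections with nilpotent
kernel. -/
theorem adjoinRoot_formallyEtale {S : Type*} [CommRing S] (m : Polynomial S)
    (hm : m.Monic) (hder : IsUnit (Polynomial.aeval (AdjoinRoot.root m) m.derivative))
    {T T' : Type*} [CommRing T] [CommRing T'] (h : T →+* T')
    (hsurj : Function.Surjective h) (hnil : ∃ n : ℕ, (RingHom.ker h) ^ n = ⊥)
    (v : S →+* T) (v' : AdjoinRoot m →+* T')
    (hcomm : v'.comp (AdjoinRoot.of m) = h.comp v) :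
    ∃! u : AdjoinRoot m →+* T, u.comp (AdjoinRoot.of m) = v ∧ h.comp u = v' := by
  classical
  obtain ⟨n, hn⟩ := hnil
  set I : Ideal T := RingHom.ker h with hI
  -- every element of `I` is nilpotent
  have hInil : ∀ x ∈ I, IsNilpotent x := by
    intro x hx
    refine ⟨n, ?_⟩
    have : x ^ n ∈ I ^ n := Ideal.pow_mem_pow hx n
    rw [hn] at this
    simpa using this
  -- units lift along `h`
  have hunit : ∀ a : T, IsUnit (h a) → IsUnit a := by
    intro a ha
    obtain ⟨b, hb⟩ := hsurj (↑ha.unit⁻¹ : T')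
    have hab : a * b - 1 ∈ I := by
      rw [hI, RingHom.mem_ker, map_sub, map_mul, hb, map_one, IsUnit.mul_val_inv, sub_self]
    have : IsUnit (a * b) := by
      have := (hInil _ hab).isUnit_add_one
      simpa using this
    exact isUnit_of_mul_isUnit_left this
  set y' : T' := v' (AdjoinRoot.root m) with hy'
  -- evaluation of polynomials at preimages of `y'`
  have heval : ∀ x : T, h x = y' → ∀ p : Polynomial S,
      h ((p.map v).eval x) = v' (Polynomial.aeval (AdjoinRoot.root m) p) := by
    intro x hx p
    rw [Polynomial.eval_map, Polynomial.hom_eval₂, ← hcomm, hx, hy',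
      Polynomial.aeval_def, AdjoinRoot.algebraMap_eq, Polynomial.hom_eval₂]
  have hevalm : ∀ x : T, h x = y' → (m.map v).eval x ∈ I := by
    intro x hx
    rw [hI, RingHom.mem_ker, heval x hx m, Polynomial.aeval_def,
      AdjoinRoot.algebraMap_eq, AdjoinRoot.eval₂_root, map_zero]
  -- the derivative is a unit at any preimage of `y'`
  have hderx : ∀ x : T, h x = y' → IsUnit ((m.derivative.map v).eval x) := by
    intro x hx
    refine hunit _ ?_
    rw [heval x hx m.derivative]
    exact hder.map v'
  -- Newton iteration: existence of better and better approximate roots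
  have newton : ∀ k : ℕ, ∃ x : T, h x = y' ∧ (m.map v).eval x ∈ I ^ (k + 1) := by
    intro k
    induction k with
    | zero =>
      obtain ⟨x, hx⟩ := hsurj y'
      exact ⟨x, hx, by simpa using hevalm x hx⟩
    | succ k ih =>
      obtain ⟨x, hx, hxk⟩ := ih
      have hw := hderx x hx
      set e : T := -(↑hw.unit⁻¹ * (m.map v).eval x) with he
      have heI : e ∈ I ^ (k + 1) := by
        rw [he]
        exact neg_mem (Ideal.mul_mem_left _ _ hxk)
      obtain ⟨c, hc⟩ := Polynomial.binomExpansion (m.map v) x e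
      have hinv : (↑hw.unit⁻¹ : T) * (m.derivative.map v).eval x = 1 := hw.val_inv_mul
      have hde : ((m.map v).derivative).eval x * e = -((m.map v).eval x) := by
        rw [Polynomial.derivative_map, he]
        calc (m.derivative.map v).eval x * -(↑hw.unit⁻¹ * (m.map v).eval x)
            = -((↑hw.unit⁻¹ * (m.derivative.map v).eval x) * (m.map v).eval x) := by ring
          _ = -((m.map v).eval x) := by rw [hinv, one_mul]
      refine ⟨x + e, ?_, ?_⟩
      · have heI1 : e ∈ I ^ 1 := Ideal.pow_le_pow_right (by omega) heI
        rw [pow_one, hI, RingHom.mem_ker] at heI1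
        rw [map_add, hx, heI1, add_zero]
      · rw [hc, hde]
        have harith : (m.map v).eval x + -((m.map v).eval x) + c * e ^ 2 = c * e ^ 2 := by ring
        rw [harith]
        have : c * e ^ 2 ∈ I ^ (2 * (k + 1)) := by
          rw [two_mul, pow_add]
          exact Ideal.mul_mem_left _ _ (by rw [sq]; exact Ideal.mul_mem_mul heI heI)
        exact Ideal.pow_le_pow_right (by omega) this
  -- obtain an exact root of `m` above `y'`
  obtain ⟨x, hx, hx0⟩ := newton n
  have hx0' : (m.map v).eval x = 0 := by
    have : (m.map v).eval x ∈ I ^ n := Ideal.pow_le_pow_right (by omega) hx0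
    rw [hn] at this
    simpa using this
  have hx0'' : Polynomial.eval₂ v x m = 0 := by rwa [← Polynomial.eval_map]
  -- the lift
  refine ⟨AdjoinRoot.lift v x hx0'', ⟨?_, ?_⟩, ?_⟩
  · exact RingHom.ext fun s => AdjoinRoot.lift_of hx0''
  · have key : (h.comp (AdjoinRoot.lift v x hx0'')).comp (AdjoinRoot.mk m)
        = v'.comp (AdjoinRoot.mk m) := by
      refine Polynomial.ringHom_ext (fun s => ?_) ?_
      · have h1 : (AdjoinRoot.mk m) (Polynomial.C s) = AdjoinRoot.of m s := rfl
        simp only [RingHom.comp_apply, h1, AdjoinRoot.lift_of]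
        exact (RingHom.congr_fun hcomm s).symm
      · have h2 : (AdjoinRoot.mk m) Polynomial.X = AdjoinRoot.root m := rfl
        simp only [RingHom.comp_apply, h2, AdjoinRoot.lift_root]
        exact hx
    refine RingHom.ext fun z => ?_
    obtain ⟨p, rfl⟩ := AdjoinRoot.mk_surjective z
    exact RingHom.congr_fun key p
  -- uniqueness
  · intro u ⟨hu1, hu2⟩
    -- the images of the root under `u` and our lift agree
    set x₁ : T := u (AdjoinRoot.root m) with hx₁
    have hhx₁ : h x₁ = y' := by
      rw [hx₁, ← RingHom.comp_apply, hu2]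
    have hx₁0 : (m.map v).eval x₁ = 0 := by
      have h0 := congrArg u (AdjoinRoot.eval₂_root m)
      rw [Polynomial.hom_eval₂, hu1, map_zero] at h0
      rw [Polynomial.eval_map, hx₁]
      exact h0
    have hw := hderx x₁ hhx₁
    -- ε := x - x₁ lies in every power of I
    have hdiff : ∀ k : ℕ, x - x₁ ∈ I ^ (k + 1) := by
      intro k
      induction k with
      | zero =>
        have hz : x - x₁ ∈ I := by
          rw [hI, RingHom.mem_ker, map_sub, hx, hhx₁, sub_self]
        rw [zero_add, pow_one]
        exact hz
      | succ k ih =>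
        obtain ⟨c, hc⟩ := Polynomial.binomExpansion (m.map v) x₁ (x - x₁)
        rw [add_sub_cancel, hx0', hx₁0, zero_add] at hc
        -- 0 = d * ε + c * ε², d a unit
        have hinv : (↑hw.unit⁻¹ : T) * (m.derivative.map v).eval x₁ = 1 := hw.val_inv_mul
        have : x - x₁ = ↑hw.unit⁻¹ * (-(c * (x - x₁) ^ 2)) := by
          have hd : ((m.map v).derivative).eval x₁ * (x - x₁) = -(c * (x - x₁)^2) := by
            rw [eq_neg_iff_add_eq_zero]
            exact hc.symm
          rw [Polynomial.derivative_map] at hd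
          calc x - x₁ = (↑hw.unit⁻¹ * (m.derivative.map v).eval x₁) * (x - x₁) := by
                rw [hinv, one_mul]
            _ = ↑hw.unit⁻¹ * (-(c * (x - x₁) ^ 2)) := by rw [mul_assoc, hd]
        rw [this]
        refine Ideal.mul_mem_left _ _ (neg_mem (Ideal.mul_mem_left _ _ ?_))
        have h2k : (x - x₁) ^ 2 ∈ I ^ (2 * (k + 1)) := by
          rw [two_mul, pow_add, sq]
          exact Ideal.mul_mem_mul ih ih
        exact Ideal.pow_le_pow_right (by omega) h2k
    have hxx₁ : x₁ = x := by
      have := hdiff n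
      have h0 : x - x₁ ∈ I ^ n := Ideal.pow_le_pow_right (by omega) this
      rw [hn] at h0
      exact (sub_eq_zero.mp ((Ideal.mem_bot).mp h0)).symm
    -- conclude `u` equals the lift
    have key : u.comp (AdjoinRoot.mk m)
        = (AdjoinRoot.lift v x hx0'').comp (AdjoinRoot.mk m) := by
      refine Polynomial.ringHom_ext (fun s => ?_) ?_
      · have h1 : (AdjoinRoot.mk m) (Polynomial.C s) = AdjoinRoot.of m s := rfl
        simp only [RingHom.comp_apply, h1, AdjoinRoot.lift_of]
        exact RingHom.congr_fun hu1 s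
      · have h2 : (AdjoinRoot.mk m) Polynomial.X = AdjoinRoot.root m := rfl
        simp only [RingHom.comp_apply, h2, AdjoinRoot.lift_root]
        rw [← hx₁, hxx₁]
    refine RingHom.ext fun z => ?_
    obtain ⟨p, rfl⟩ := AdjoinRoot.mk_surjective z
    exact RingHom.congr_fun key p
end

section
/- Let K be a field, R a commutative K-algebra, and ψ : R → R[[T]] a higher derivation with components ψ^(k). For a ∈ K define a.ψ to be the higher derivation with components (a.ψ)^(k) = a^k ψ^(k). If ψ is iterative (ψ^(i)∘ψ^(j) = C(i+j,i)ψ^(i+j) for all i,j), then for all a, b ∈ K: (a.ψ)·(b.ψ) = (a+b).ψ, where · is the product of higher derivations given by (ψ₁·ψ₂)^(k) = Σ_{i+j=k} ψ₁^(i)∘ψ₂^(j). Conversely, if K is infinite and (a.ψ)·(b.ψ) = (a+b).ψ holds for all a,b ∈ K, then ψ is iterative. -/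
open PowerSeries

private lemma poly_vanish {K M : Type*} [Field K] [Infinite K] [AddCommGroup M] [Module K M]
    (n : ℕ) (f : ℕ → M) (h : ∀ a : K, ∑ i ∈ Finset.range n, a ^ i • f i = 0) :
    ∀ i ∈ Finset.range n, f i = 0 := by
  intro i hi
  rw [← Module.forall_dual_apply_eq_zero_iff K]
  intro φ
  have hp : ∀ a : K,
      Polynomial.eval a (∑ i ∈ Finset.range n, Polynomial.C (φ (f i)) * Polynomial.X ^ i) = 0 := by
    intro a
    have := congrArg φ (h a)
    simp only [map_sum, map_smul, map_zero, smul_eq_mul] at this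
    simp only [Polynomial.eval_finset_sum, Polynomial.eval_mul, Polynomial.eval_C,
      Polynomial.eval_pow, Polynomial.eval_X]
    rw [← this]
    exact Finset.sum_congr rfl fun j _ => mul_comm _ _
  have hzero : (∑ i ∈ Finset.range n, Polynomial.C (φ (f i)) * Polynomial.X ^ i) = 0 :=
    Polynomial.funext fun a => by rw [hp a, Polynomial.eval_zero]
  have hc := congrArg (fun p => Polynomial.coeff p i) hzero
  simpa [Polynomial.finset_sum_coeff, Polynomial.coeff_X_pow, Finset.sum_ite_eq', hi] using hc

/-- For a higher derivation `ψ` and `a ∈ K` let `a.ψ` have components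
`aᵏ ψ⁽ᵏ⁾`. If `ψ` is iterative then `(a.ψ)·(b.ψ) = (a+b).ψ` for all `a, b ∈ K`
(componentwise, via `(ψ₁·ψ₂)⁽ᵏ⁾ = Σ_{i+j=k} ψ₁⁽ⁱ⁾∘ψ₂⁽ʲ⁾`); conversely, if `K` is
infinite and this identity holds for all `a, b ∈ K`, then `ψ` is iterative. -/
theorem iterative_iff_additive_action {K R : Type*} [Field K] [CommRing R] [Algebra K R]
    (ψ : R →ₐ[K] PowerSeries R)
    (h0 : ∀ r : R, PowerSeries.constantCoeff (R := R) (ψ r) = r) :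
    ((∀ (i j : ℕ) (r : R),
        PowerSeries.coeff (R := R) i (ψ (PowerSeries.coeff (R := R) j (ψ r))) =
          (((i + j).choose i : K)) • PowerSeries.coeff (R := R) (i + j) (ψ r)) →
      ∀ (a b : K) (k : ℕ) (r : R),
        ∑ p ∈ Finset.HasAntidiagonal.antidiagonal k,
            a ^ p.1 • PowerSeries.coeff (R := R) p.1 (ψ (b ^ p.2 • PowerSeries.coeff (R := R) p.2 (ψ r))) =
          (a + b) ^ k • PowerSeries.coeff (R := R) k (ψ r)) ∧
    (Infinite K →
      (∀ (a b : K) (k : ℕ) (r : R),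
        ∑ p ∈ Finset.HasAntidiagonal.antidiagonal k,
            a ^ p.1 • PowerSeries.coeff (R := R) p.1 (ψ (b ^ p.2 • PowerSeries.coeff (R := R) p.2 (ψ r))) =
          (a + b) ^ k • PowerSeries.coeff (R := R) k (ψ r)) →
      ∀ (i j : ℕ) (r : R),
        PowerSeries.coeff (R := R) i (ψ (PowerSeries.coeff (R := R) j (ψ r))) =
          (((i + j).choose i : K)) • PowerSeries.coeff (R := R) (i + j) (ψ r)) := by
  constructor
  · intro h a b k r
    have key : ∀ p ∈ Finset.HasAntidiagonal.antidiagonal k,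
        a ^ p.1 • PowerSeries.coeff (R := R) p.1 (ψ (b ^ p.2 • PowerSeries.coeff (R := R) p.2 (ψ r))) =
        ((k.choose p.1 : K) * (a ^ p.1 * b ^ p.2)) • PowerSeries.coeff (R := R) k (ψ r) := by
      intro p hp
      have hpk : p.1 + p.2 = k := Finset.HasAntidiagonal.mem_antidiagonal.mp hp
      rw [map_smul, PowerSeries.coeff_smul, h p.1 p.2 r, hpk]
      rw [smul_smul, smul_smul]
      ring_nf
    rw [Finset.sum_congr rfl key, ← Finset.sum_smul]
    congr 1
    rw [(Commute.all a b).add_pow' k]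
    exact Finset.sum_congr rfl fun p _ => by rw [nsmul_eq_mul]
  · intro _ h i j r
    set k := i + j with hk
    have hsum : ∀ a : K, ∑ m ∈ Finset.range (k + 1),
        a ^ m • (PowerSeries.coeff (R := R) m (ψ (PowerSeries.coeff (R := R) (k - m) (ψ r))) -
          (k.choose m : K) • PowerSeries.coeff (R := R) k (ψ r)) = 0 := by
      intro a
      have h1 := h a 1 k r
      rw [Finset.Nat.sum_antidiagonal_eq_sum_range_succ_mk] at h1
      have h2 : (a + 1) ^ k • PowerSeries.coeff (R := R) k (ψ r) =
          ∑ m ∈ Finset.range (k + 1),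
            a ^ m • ((k.choose m : K) • PowerSeries.coeff (R := R) k (ψ r)) := by
        rw [(Commute.all a 1).add_pow' k, Finset.Nat.sum_antidiagonal_eq_sum_range_succ_mk,
          Finset.sum_smul]
        exact Finset.sum_congr rfl fun m _ => by
          rw [nsmul_eq_mul, smul_smul]; congr 1; push_cast; ring
      simp only [one_pow, one_smul] at h1
      rw [h2] at h1
      simp only [smul_sub, Finset.sum_sub_distrib, h1, sub_self]
    have := poly_vanish (k + 1) _ hsum i (Finset.mem_range.mpr (by omega))
    have hkij : k - i = j := by omega
    rw [hkij] at this
    rw [sub_eq_zero] at this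
    exact this
end

section
/- Let K be a field and R a commutative K-algebra. If φ₁, φ₂ are iterative derivations of R over K that commute, i.e. φ₁^(i) ∘ φ₂^(j) = φ₂^(j) ∘ φ₁^(i) for all i, j ∈ ℕ, then their product φ₁·φ₂ (with components (φ₁·φ₂)^(k) = Σ_{i+j=k} φ₁^(i)∘φ₂^(j)) is again an iterative derivation. -/
open PowerSeries

private lemma sum4_swap {M : Type*} [AddCommMonoid M] (k : ℕ) (f : ℕ → ℕ → ℕ → ℕ → M) :
    ∑ p ∈ Finset.HasAntidiagonal.antidiagonal k, ∑ u ∈ Finset.HasAntidiagonal.antidiagonal p.1, ∑ q ∈ Finset.HasAntidiagonal.antidiagonal p.2,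
      f u.1 u.2 q.1 q.2 =
    ∑ p ∈ Finset.HasAntidiagonal.antidiagonal k, ∑ u ∈ Finset.HasAntidiagonal.antidiagonal p.1, ∑ q ∈ Finset.HasAntidiagonal.antidiagonal p.2,
      f u.1 q.1 u.2 q.2 := by
  have key : ∀ g : (ℕ × ℕ) → (ℕ × ℕ) → (ℕ × ℕ) → M,
      (∑ p ∈ Finset.HasAntidiagonal.antidiagonal k, ∑ u ∈ Finset.HasAntidiagonal.antidiagonal p.1,
        ∑ q ∈ Finset.HasAntidiagonal.antidiagonal p.2, g p u q)
      = ∑ x ∈ (Finset.HasAntidiagonal.antidiagonal k).sigma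
          (fun p => Finset.HasAntidiagonal.antidiagonal p.1 ×ˢ Finset.HasAntidiagonal.antidiagonal p.2),
          g x.1 x.2.1 x.2.2 := by
    intro g
    rw [Finset.sum_sigma]
    refine Finset.sum_congr rfl fun p _ => ?_
    exact (Finset.sum_product (s := Finset.HasAntidiagonal.antidiagonal p.1)
      (t := Finset.HasAntidiagonal.antidiagonal p.2) (f := fun y => g p y.1 y.2)).symm
  rw [key, key]
  refine Finset.sum_nbij'
    (fun x => ⟨(x.2.1.1 + x.2.2.1, x.2.1.2 + x.2.2.2), ((x.2.1.1, x.2.2.1), (x.2.1.2, x.2.2.2))⟩)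
    (fun x => ⟨(x.2.1.1 + x.2.2.1, x.2.1.2 + x.2.2.2), ((x.2.1.1, x.2.2.1), (x.2.1.2, x.2.2.2))⟩)
    ?_ ?_ ?_ ?_ ?_
  · rintro ⟨⟨p1, p2⟩, ⟨⟨a, b⟩, ⟨c, d⟩⟩⟩ hx
    simp only [Finset.mem_sigma, Finset.mem_product, Finset.HasAntidiagonal.mem_antidiagonal, and_true, true_and] at hx ⊢
    omega
  · rintro ⟨⟨p1, p2⟩, ⟨⟨a, b⟩, ⟨c, d⟩⟩⟩ hx
    simp only [Finset.mem_sigma, Finset.mem_product, Finset.HasAntidiagonal.mem_antidiagonal, and_true, true_and] at hx ⊢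
    omega
  · rintro ⟨⟨p1, p2⟩, ⟨⟨a, b⟩, ⟨c, d⟩⟩⟩ hx
    simp only [Finset.mem_sigma, Finset.mem_product, Finset.HasAntidiagonal.mem_antidiagonal] at hx
    simp only [Sigma.mk.inj_iff, Prod.mk.injEq, heq_eq_eq, and_true, true_and]
    omega
  · rintro ⟨⟨p1, p2⟩, ⟨⟨a, b⟩, ⟨c, d⟩⟩⟩ hx
    simp only [Finset.mem_sigma, Finset.mem_product, Finset.HasAntidiagonal.mem_antidiagonal] at hx
    simp only [Sigma.mk.inj_iff, Prod.mk.injEq, heq_eq_eq, and_true, true_and]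
    omega
  · rintro ⟨⟨p1, p2⟩, ⟨⟨a, b⟩, ⟨c, d⟩⟩⟩ _
    rfl

/-- The product of two commuting iterative derivations of `R` over `K`
(with components `(φ₁·φ₂)⁽ᵏ⁾ = Σ_{i+j=k} φ₁⁽ⁱ⁾∘φ₂⁽ʲ⁾`) is again an iterative
derivation. -/
theorem product_of_commuting_iterative_derivations {K R : Type*} [Field K] [CommRing R]
    [Algebra K R] (φ₁ φ₂ : R →ₐ[K] PowerSeries R)
    (h01 : ∀ r : R, PowerSeries.constantCoeff (φ₁ r) = r)
    (h02 : ∀ r : R, PowerSeries.constantCoeff (φ₂ r) = r)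
    (hiter1 : ∀ (i j : ℕ) (r : R),
      PowerSeries.coeff i (φ₁ (PowerSeries.coeff j (φ₁ r))) =
        (((i + j).choose i : K)) • PowerSeries.coeff (i + j) (φ₁ r))
    (hiter2 : ∀ (i j : ℕ) (r : R),
      PowerSeries.coeff i (φ₂ (PowerSeries.coeff j (φ₂ r))) =
        (((i + j).choose i : K)) • PowerSeries.coeff (i + j) (φ₂ r))
    (hcomm : ∀ (i j : ℕ) (r : R),
      PowerSeries.coeff i (φ₁ (PowerSeries.coeff j (φ₂ r))) =
        PowerSeries.coeff j (φ₂ (PowerSeries.coeff i (φ₁ r)))) :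
    ∃ χ : R →ₐ[K] PowerSeries R,
      (∀ (r : R) (k : ℕ), PowerSeries.coeff k (χ r) =
          ∑ p ∈ Finset.HasAntidiagonal.antidiagonal k,
            PowerSeries.coeff p.1 (φ₁ (PowerSeries.coeff p.2 (φ₂ r)))) ∧
      (∀ r : R, PowerSeries.constantCoeff (χ r) = r) ∧
      (∀ (i j : ℕ) (r : R),
        PowerSeries.coeff i (χ (PowerSeries.coeff j (χ r))) =
          (((i + j).choose i : K)) • PowerSeries.coeff (i + j) (χ r)) := by
  classical
  -- coefficient computation for `C`-like elements
  have claim : ∀ a : R, φ₁ a = PowerSeries.C a → φ₂ a = PowerSeries.C a → ∀ k : ℕ,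
      (∑ p ∈ Finset.HasAntidiagonal.antidiagonal k,
        PowerSeries.coeff p.1 (φ₁ (PowerSeries.coeff p.2 (φ₂ a)))) =
      PowerSeries.coeff k (PowerSeries.C a) := by
    intro a ha1 ha2 k
    rcases Nat.eq_zero_or_pos k with rfl | hk
    · simp [ha1, ha2, PowerSeries.coeff_zero_eq_constantCoeff]
    · rw [PowerSeries.coeff_C, if_neg hk.ne']
      refine Finset.sum_eq_zero fun p hp => ?_
      rw [Finset.HasAntidiagonal.mem_antidiagonal] at hp
      rcases Nat.eq_zero_or_pos p.2 with h2 | h2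
      · have h1 : p.1 = k := by omega
        simp [ha1, ha2, h2, h1, PowerSeries.coeff_C, hk.ne']
      · simp [ha2, PowerSeries.coeff_C, h2.ne']
  let χ : R →ₐ[K] PowerSeries R :=
  { toFun := fun r => PowerSeries.mk fun k => ∑ p ∈ Finset.HasAntidiagonal.antidiagonal k,
      PowerSeries.coeff p.1 (φ₁ (PowerSeries.coeff p.2 (φ₂ r)))
    map_one' := by
      refine PowerSeries.ext fun k => ?_
      rw [PowerSeries.coeff_mk]
      have := claim 1 (by simp) (by simp) k
      simpa using this
    map_mul' := fun r s => by
      refine PowerSeries.ext fun k => ?_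
      rw [PowerSeries.coeff_mk, PowerSeries.coeff_mul]
      simp only [PowerSeries.coeff_mk]
      calc ∑ p ∈ Finset.HasAntidiagonal.antidiagonal k,
            PowerSeries.coeff p.1 (φ₁ (PowerSeries.coeff p.2 (φ₂ (r * s))))
          = ∑ p ∈ Finset.HasAntidiagonal.antidiagonal k, ∑ u ∈ Finset.HasAntidiagonal.antidiagonal p.1,
              ∑ q ∈ Finset.HasAntidiagonal.antidiagonal p.2,
              PowerSeries.coeff u.1 (φ₁ (PowerSeries.coeff q.1 (φ₂ r))) *
                PowerSeries.coeff u.2 (φ₁ (PowerSeries.coeff q.2 (φ₂ s))) := by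
            refine Finset.sum_congr rfl fun p _ => ?_
            rw [map_mul, PowerSeries.coeff_mul, map_sum, map_sum]
            refine Eq.trans (Finset.sum_congr rfl fun q _ => ?_) Finset.sum_comm
            rw [map_mul, PowerSeries.coeff_mul]
          _ = ∑ p ∈ Finset.HasAntidiagonal.antidiagonal k, ∑ u ∈ Finset.HasAntidiagonal.antidiagonal p.1,
              ∑ q ∈ Finset.HasAntidiagonal.antidiagonal p.2,
              PowerSeries.coeff u.1 (φ₁ (PowerSeries.coeff u.2 (φ₂ r))) *
                PowerSeries.coeff q.1 (φ₁ (PowerSeries.coeff q.2 (φ₂ s))) :=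
            sum4_swap k (fun a b c d =>
              PowerSeries.coeff a (φ₁ (PowerSeries.coeff c (φ₂ r))) *
                PowerSeries.coeff b (φ₁ (PowerSeries.coeff d (φ₂ s))))
          _ = ∑ p ∈ Finset.HasAntidiagonal.antidiagonal k,
              (∑ u ∈ Finset.HasAntidiagonal.antidiagonal p.1,
                PowerSeries.coeff u.1 (φ₁ (PowerSeries.coeff u.2 (φ₂ r)))) *
              (∑ q ∈ Finset.HasAntidiagonal.antidiagonal p.2,
                PowerSeries.coeff q.1 (φ₁ (PowerSeries.coeff q.2 (φ₂ s)))) := by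
            refine Finset.sum_congr rfl fun p _ => ?_
            rw [Finset.sum_mul_sum]
    map_zero' := by
      refine PowerSeries.ext fun k => ?_
      simp [PowerSeries.coeff_mk]
    map_add' := fun r s => by
      refine PowerSeries.ext fun k => ?_
      simp [PowerSeries.coeff_mk, Finset.sum_add_distrib]
    commutes' := fun x => by
      refine PowerSeries.ext fun k => ?_
      rw [PowerSeries.coeff_mk, PowerSeries.algebraMap_apply (A := R)]
      exact claim (algebraMap K R x)
        (by rw [AlgHom.commutes, PowerSeries.algebraMap_apply])
        (by rw [AlgHom.commutes, PowerSeries.algebraMap_apply]) k }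
  have hcoeff : ∀ (r : R) (k : ℕ), PowerSeries.coeff k (χ r) =
      ∑ p ∈ Finset.HasAntidiagonal.antidiagonal k,
        PowerSeries.coeff p.1 (φ₁ (PowerSeries.coeff p.2 (φ₂ r))) := by
    intro r k
    simp only [χ, AlgHom.coe_mk, RingHom.coe_mk, MonoidHom.coe_mk, OneHom.coe_mk,
      PowerSeries.coeff_mk]
  refine ⟨χ, hcoeff, ?_, ?_⟩
  · intro r
    rw [← PowerSeries.coeff_zero_eq_constantCoeff_apply, hcoeff]
    simp [PowerSeries.coeff_zero_eq_constantCoeff, h01, h02]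
  · intro i j r
    have hterm : ∀ v w : ℕ × ℕ,
        PowerSeries.coeff v.1 (φ₁ (PowerSeries.coeff v.2 (φ₂
          (PowerSeries.coeff w.1 (φ₁ (PowerSeries.coeff w.2 (φ₂ r))))))) =
        (((v.1 + w.1).choose v.1 : K) * ((v.2 + w.2).choose v.2 : K)) •
          PowerSeries.coeff (v.1 + w.1) (φ₁ (PowerSeries.coeff (v.2 + w.2) (φ₂ r))) := by
      intro v w
      rw [← hcomm w.1 v.2, hiter2 v.2 w.2 r, map_smul, PowerSeries.coeff_smul, map_smul,
        PowerSeries.coeff_smul, hiter1 v.1 w.1, mul_smul]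
      exact smul_comm _ _ _
    calc PowerSeries.coeff i (χ (PowerSeries.coeff j (χ r)))
        = ∑ w ∈ Finset.HasAntidiagonal.antidiagonal j, ∑ v ∈ Finset.HasAntidiagonal.antidiagonal i,
            PowerSeries.coeff v.1 (φ₁ (PowerSeries.coeff v.2 (φ₂
              (PowerSeries.coeff w.1 (φ₁ (PowerSeries.coeff w.2 (φ₂ r))))))) := by
          rw [hcoeff r j, map_sum, map_sum]
          exact Finset.sum_congr rfl fun w _ => hcoeff _ i
      _ = ∑ w ∈ Finset.HasAntidiagonal.antidiagonal j, ∑ v ∈ Finset.HasAntidiagonal.antidiagonal i,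
            (((v.1 + w.1).choose v.1 : K) * ((v.2 + w.2).choose v.2 : K)) •
              PowerSeries.coeff (v.1 + w.1) (φ₁
                (PowerSeries.coeff (v.2 + w.2) (φ₂ r))) :=
          Finset.sum_congr rfl fun w _ => Finset.sum_congr rfl fun v _ => hterm v w
      _ = ∑ x ∈ Finset.HasAntidiagonal.antidiagonal j ×ˢ Finset.HasAntidiagonal.antidiagonal i,
            (((x.2.1 + x.1.1).choose x.2.1 : K) * ((x.2.2 + x.1.2).choose x.2.2 : K)) •
              PowerSeries.coeff (x.2.1 + x.1.1) (φ₁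
                (PowerSeries.coeff (x.2.2 + x.1.2) (φ₂ r))) :=
          (Finset.sum_product (s := Finset.HasAntidiagonal.antidiagonal j) (t := Finset.HasAntidiagonal.antidiagonal i)
            (f := fun x => (((x.2.1 + x.1.1).choose x.2.1 : K) *
              ((x.2.2 + x.1.2).choose x.2.2 : K)) •
              PowerSeries.coeff (x.2.1 + x.1.1) (φ₁
                (PowerSeries.coeff (x.2.2 + x.1.2) (φ₂ r))))).symm
      _ = ∑ x ∈ (Finset.HasAntidiagonal.antidiagonal (i + j) ×ˢ Finset.HasAntidiagonal.antidiagonal i).filter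
            (fun x => x.2.1 ≤ x.1.1 ∧ x.2.2 ≤ x.1.2),
            ((x.1.1.choose x.2.1 : K) * (x.1.2.choose x.2.2 : K)) •
              PowerSeries.coeff x.1.1 (φ₁ (PowerSeries.coeff x.1.2 (φ₂ r))) := by
          refine Finset.sum_nbij' (fun x => ((x.2.1 + x.1.1, x.2.2 + x.1.2), x.2))
            (fun x => ((x.1.1 - x.2.1, x.1.2 - x.2.2), x.2)) ?_ ?_ ?_ ?_ ?_
          · rintro ⟨⟨w1, w2⟩, ⟨v1, v2⟩⟩ hx
            simp only [Finset.mem_product, Finset.mem_filter, Finset.HasAntidiagonal.mem_antidiagonal] at hx ⊢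
            omega
          · rintro ⟨⟨p1, p2⟩, ⟨u1, u2⟩⟩ hx
            simp only [Finset.mem_product, Finset.mem_filter, Finset.HasAntidiagonal.mem_antidiagonal] at hx ⊢
            omega
          · rintro ⟨⟨w1, w2⟩, ⟨v1, v2⟩⟩ hx
            simp only [Finset.mem_product, Finset.HasAntidiagonal.mem_antidiagonal] at hx
            simp only [Prod.mk.injEq, and_true, true_and]
            omega
          · rintro ⟨⟨p1, p2⟩, ⟨u1, u2⟩⟩ hx
            simp only [Finset.mem_product, Finset.mem_filter, Finset.HasAntidiagonal.mem_antidiagonal] at hx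
            simp only [Prod.mk.injEq, and_true, true_and]
            omega
          · rintro ⟨⟨w1, w2⟩, ⟨v1, v2⟩⟩ _
            rfl
      _ = ∑ x ∈ Finset.HasAntidiagonal.antidiagonal (i + j) ×ˢ Finset.HasAntidiagonal.antidiagonal i,
            ((x.1.1.choose x.2.1 : K) * (x.1.2.choose x.2.2 : K)) •
              PowerSeries.coeff x.1.1 (φ₁ (PowerSeries.coeff x.1.2 (φ₂ r))) := by
          refine Finset.sum_subset (Finset.filter_subset _ _) fun x hx hnx => ?_
          rw [Finset.mem_filter, not_and] at hnx
          have h := hnx hx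
          rcases not_and_or.mp h with h' | h'
          · rw [Nat.choose_eq_zero_of_lt (by omega)]
            simp
          · rw [Nat.choose_eq_zero_of_lt (show x.1.2 < x.2.2 by omega)]
            simp
      _ = ∑ p ∈ Finset.HasAntidiagonal.antidiagonal (i + j), ∑ u ∈ Finset.HasAntidiagonal.antidiagonal i,
            ((p.1.choose u.1 : K) * (p.2.choose u.2 : K)) •
              PowerSeries.coeff p.1 (φ₁ (PowerSeries.coeff p.2 (φ₂ r))) :=
          Finset.sum_product (s := Finset.HasAntidiagonal.antidiagonal (i + j)) (t := Finset.HasAntidiagonal.antidiagonal i)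
            (f := fun x => ((x.1.1.choose x.2.1 : K) * (x.1.2.choose x.2.2 : K)) •
              PowerSeries.coeff x.1.1 (φ₁ (PowerSeries.coeff x.1.2 (φ₂ r))))
      _ = ∑ p ∈ Finset.HasAntidiagonal.antidiagonal (i + j),
            (((i + j).choose i : K)) •
              PowerSeries.coeff p.1 (φ₁ (PowerSeries.coeff p.2 (φ₂ r))) := by
          refine Finset.sum_congr rfl fun p hp => ?_
          rw [Finset.HasAntidiagonal.mem_antidiagonal] at hp
          rw [← Finset.sum_smul]
          congr 1
          have h1 : ((i + j).choose i : K) = (((p.1 + p.2).choose i : ℕ) : K) := by rw [hp]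
          rw [h1, Nat.add_choose_eq, Nat.cast_sum]
          exact Finset.sum_congr rfl fun u _ => by push_cast; ring
      _ = (((i + j).choose i : K)) • PowerSeries.coeff (i + j) (χ r) := by
          rw [hcoeff, Finset.smul_sum]
end

section
/- Let (R, 𝔪) be a regular local ring of Krull dimension m over a field K, with 𝔪 generated by t₁,…,t_m, and suppose R is equipped with m pairwise commuting iterative derivations φ_{t₁},…,φ_{t_m} satisfying φ_{t_j}^(1)(t_i) = δ_{ij} and φ_{t_j}^(k)(t_i) = 0 for i ≠ j, k ≥ 1. Then for every r ∈ R ∖ {0} there exist k₁,…,k_m ∈ ℕ such that (φ_{t_m}^(k_m) ∘ ⋯ ∘ φ_{t_1}^(k_1))(r) is a unit in R, while (φ_{t_m}^(l_m) ∘ ⋯ ∘ φ_{t_1}^(l_1))(r) is a non-unit whenever l_j ≤ k_j for all j with strict inequality for some j. -/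
open PowerSeries Pointwise

/-- The composite `g_{m-1}^{(k_{m-1})} ∘ ⋯ ∘ g_0^{(k_0)}` of component maps. -/
def multiComp {R : Type*} {m : ℕ} (g : Fin m → ℕ → R → R) (k : Fin m → ℕ) : R → R :=
  (List.ofFn fun j : Fin m => g j (k j)).foldl (fun f u => u ∘ f) id

section Aux

variable {K R : Type*} [Field K] [CommRing R] [Algebra K R] {m : ℕ}

/-- The `i`-th Hasse derivative in direction `j`. -/
private noncomputable def Dv (φ : Fin m → (R →ₐ[K] PowerSeries R)) (j : Fin m) (i : ℕ) (x : R) : R :=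
  PowerSeries.coeff i ((φ j) x)

private lemma Dv_add (φ : Fin m → (R →ₐ[K] PowerSeries R)) (j : Fin m) (i : ℕ) (x y : R) :
    Dv φ j i (x + y) = Dv φ j i x + Dv φ j i y := by
  simp [Dv, map_add]

private lemma Dv_zero' (φ : Fin m → (R →ₐ[K] PowerSeries R)) (j : Fin m) (i : ℕ) :
    Dv φ j i 0 = 0 := by
  simp [Dv]

private lemma Dv_leibniz (φ : Fin m → (R →ₐ[K] PowerSeries R)) (j : Fin m) (i : ℕ) (x y : R) :
    Dv φ j i (x * y) = ∑ p ∈ Finset.HasAntidiagonal.antidiagonal i, Dv φ j p.1 x * Dv φ j p.2 y := by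
  simp [Dv, map_mul, PowerSeries.coeff_mul]

variable {φ : Fin m → (R →ₐ[K] PowerSeries R)} {t : Fin m → R}

private lemma Dv_zeroth (h0 : ∀ j (r : R), PowerSeries.constantCoeff (φ j r) = r)
    (j : Fin m) (x : R) : Dv φ j 0 x = x := by
  rw [Dv, PowerSeries.coeff_zero_eq_constantCoeff]; exact h0 j x

/-- Multiplying by a transversal variable commutes with the derivative. -/
private lemma Dv_mul_t (h0 : ∀ j (r : R), PowerSeries.constantCoeff (φ j r) = r)
    (hoff : ∀ (i j : Fin m) (k : ℕ), i ≠ j → 1 ≤ k →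
      PowerSeries.coeff k ((φ j) (t i)) = 0)
    {j j' : Fin m} (hne : j' ≠ j) (i : ℕ) (x : R) :
    Dv φ j i (x * t j') = Dv φ j i x * t j' := by
  rw [Dv_leibniz]
  rw [Finset.sum_eq_single_of_mem (i, 0) (Finset.HasAntidiagonal.mem_antidiagonal.mpr (by simp))]
  · rw [Dv_zeroth h0]
  · intro p hp hpne
    have h2 : 1 ≤ p.2 := by
      rcases Nat.eq_zero_or_pos p.2 with h | h
      · exfalso; apply hpne
        have := Finset.HasAntidiagonal.mem_antidiagonal.mp hp
        ext <;> omega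
      · exact h
    have : Dv φ j p.2 (t j') = 0 := hoff j' j p.2 hne h2
    rw [this, mul_zero]

private lemma Dv_dvd (h0 : ∀ j (r : R), PowerSeries.constantCoeff (φ j r) = r)
    (hoff : ∀ (i j : Fin m) (k : ℕ), i ≠ j → 1 ≤ k →
      PowerSeries.coeff k ((φ j) (t i)) = 0)
    {j j' : Fin m} (hne : j' ≠ j) (i : ℕ) {x : R} (hx : t j' ∣ x) :
    t j' ∣ Dv φ j i x := by
  obtain ⟨z, hz⟩ := hx
  have : x = z * t j' := by rw [hz]; ring
  rw [this, Dv_mul_t h0 hoff hne]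
  exact Dvd.intro_left _ rfl

private lemma Dv_mul_pow (h0 : ∀ j (r : R), PowerSeries.constantCoeff (φ j r) = r)
    (hoff : ∀ (i j : Fin m) (k : ℕ), i ≠ j → 1 ≤ k →
      PowerSeries.coeff k ((φ j) (t i)) = 0)
    {j j' : Fin m} (hne : j' ≠ j) (i n : ℕ) (x : R) :
    Dv φ j i (x * t j' ^ n) = Dv φ j i x * t j' ^ n := by
  induction n generalizing x with
  | zero => simp
  | succ n ih =>
    have : x * t j' ^ (n + 1) = (x * t j' ^ n) * t j' := by ring
    rw [this, Dv_mul_t h0 hoff hne, ih, pow_succ]; ring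

/-- Low-order derivatives of `x * t j ^ e` are divisible by `t j`. -/
private lemma Dv_low (h0 : ∀ j (r : R), PowerSeries.constantCoeff (φ j r) = r)
    (j : Fin m) :
    ∀ (e i : ℕ), i < e → ∀ x : R, t j ∣ Dv φ j i (x * t j ^ e) := by
  intro e
  induction e with
  | zero => intro i hi; omega
  | succ e ih =>
    intro i hi x
    have h1 : x * t j ^ (e + 1) = (x * t j ^ e) * t j := by ring
    rw [h1, Dv_leibniz]
    apply Finset.dvd_sum
    intro p hp
    have hpsum := Finset.HasAntidiagonal.mem_antidiagonal.mp hp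
    rcases Nat.eq_zero_or_pos p.2 with h2 | h2
    · have : Dv φ j p.2 (t j) = t j := by rw [h2, Dv_zeroth h0]
      rw [this]; exact Dvd.intro_left _ rfl
    · exact Dvd.dvd.mul_right (ih p.1 (by omega) x) _

/-- The `e`-th derivative of `x * t j ^ e` is `x` modulo `t j`. -/
private lemma Dv_exact (h0 : ∀ j (r : R), PowerSeries.constantCoeff (φ j r) = r)
    (hδ : ∀ i j : Fin m, PowerSeries.coeff 1 ((φ j) (t i)) = if i = j then 1 else 0)
    (j : Fin m) :
    ∀ (e : ℕ) (x : R), t j ∣ (Dv φ j e (x * t j ^ e) - x) := by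
  intro e
  induction e with
  | zero => intro x; rw [pow_zero, mul_one, Dv_zeroth h0, sub_self]; exact dvd_zero _
  | succ e ih =>
    intro x
    have h1 : x * t j ^ (e + 1) = (x * t j ^ e) * t j := by ring
    rw [h1, Dv_leibniz]
    have hmem : ((e : ℕ), (1 : ℕ)) ∈ Finset.HasAntidiagonal.antidiagonal (e + 1) :=
      Finset.HasAntidiagonal.mem_antidiagonal.mpr (by omega)
    rw [← Finset.add_sum_erase _ _ hmem]
    have h2 : Dv φ j 1 (t j) = 1 := by
      rw [Dv]; rw [hδ j j]; simp
    rw [h2, mul_one]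
    have h3 : Dv φ j e (x * t j ^ e) + (∑ p ∈ (Finset.HasAntidiagonal.antidiagonal (e + 1)).erase (e, 1),
        Dv φ j p.1 (x * t j ^ e) * Dv φ j p.2 (t j)) - x =
        (Dv φ j e (x * t j ^ e) - x) + (∑ p ∈ (Finset.HasAntidiagonal.antidiagonal (e + 1)).erase (e, 1),
        Dv φ j p.1 (x * t j ^ e) * Dv φ j p.2 (t j)) := by ring
    rw [h3]
    apply dvd_add (ih x)
    apply Finset.dvd_sum
    intro p hp
    have hpe := Finset.mem_erase.mp hp
    have hpsum := Finset.HasAntidiagonal.mem_antidiagonal.mp hpe.2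
    rcases Nat.lt_or_ge p.2 1 with h4 | h4
    · have hp2 : p.2 = 0 := by omega
      have : Dv φ j p.2 (t j) = t j := by rw [hp2, Dv_zeroth h0]
      rw [this]; exact Dvd.intro_left _ rfl
    · rcases Nat.lt_or_ge p.2 2 with h5 | h5
      · exfalso; apply hpe.1; have : p.2 = 1 := by omega
        ext <;> omega
      · exact Dvd.dvd.mul_right (Dv_low h0 j e p.1 (by omega) x) _

/-- Folding the derivations over a list of indices. -/
private noncomputable def aL (φ : Fin m → (R →ₐ[K] PowerSeries R)) (f : Fin m → ℕ)
    (L : List (Fin m)) (x : R) : R :=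
  L.foldl (fun y j => Dv φ j (f j) y) x

private lemma aL_cons (f : Fin m → ℕ) (j : Fin m) (L : List (Fin m)) (x : R) :
    aL φ f (j :: L) x = aL φ f L (Dv φ j (f j) x) := rfl

private lemma aL_add (f : Fin m → ℕ) (L : List (Fin m)) :
    ∀ x y : R, aL φ f L (x + y) = aL φ f L x + aL φ f L y := by
  induction L with
  | nil => intro x y; rfl
  | cons j L ih => intro x y; rw [aL_cons, Dv_add, ih, aL_cons, aL_cons]

private lemma aL_zero (f : Fin m → ℕ) (L : List (Fin m)) : aL φ f L (0 : R) = 0 := by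
  induction L with
  | nil => rfl
  | cons j L ih => rw [aL_cons, Dv_zero', ih]

private lemma aL_dvd (h0 : ∀ j (r : R), PowerSeries.constantCoeff (φ j r) = r)
    (hoff : ∀ (i j : Fin m) (k : ℕ), i ≠ j → 1 ≤ k →
      PowerSeries.coeff k ((φ j) (t i)) = 0)
    (f : Fin m → ℕ) {j' : Fin m} (L : List (Fin m)) (hL : j' ∉ L) :
    ∀ x : R, t j' ∣ x → t j' ∣ aL φ f L x := by
  induction L with
  | nil => intro x hx; exact hx
  | cons j L ih =>
    intro x hx
    rw [aL_cons]
    refine ih (fun h => hL (List.mem_cons_of_mem _ h))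
      _ (Dv_dvd h0 hoff ?_ _ hx)
    intro h; subst h; exact hL (List.mem_cons_self)

/-- The monomial `∏_{j ∈ L} t j ^ e j`. -/
private def Tm (t : Fin m → R) (e : Fin m → ℕ) (L : List (Fin m)) : R :=
  (L.map fun j => t j ^ e j).prod

private lemma Dv_mul_Tm (h0 : ∀ j (r : R), PowerSeries.constantCoeff (φ j r) = r)
    (hoff : ∀ (i j : Fin m) (k : ℕ), i ≠ j → 1 ≤ k →
      PowerSeries.coeff k ((φ j) (t i)) = 0)
    {j : Fin m} (e : Fin m → ℕ) (i : ℕ) (L : List (Fin m)) (hL : j ∉ L) :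
    ∀ x : R, Dv φ j i (x * Tm t e L) = Dv φ j i x * Tm t e L := by
  induction L with
  | nil => intro x; simp [Tm]
  | cons j' L ih =>
    intro x
    have hne : j' ≠ j := by intro h; subst h; exact hL (List.mem_cons_self)
    have hTm : Tm t e (j' :: L) = t j' ^ e j' * Tm t e L := by
      simp [Tm, List.map_cons]
    have h1 : x * Tm t e (j' :: L) = (x * t j' ^ e j') * Tm t e L := by
      rw [hTm]; ring
    rw [h1, ih (fun h => hL (List.mem_cons_of_mem _ h)),
      Dv_mul_pow h0 hoff hne, hTm]
    ring

/-- Main Lemma A: if some exponent exceeds the derivation order, the result is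
divisible by some `t j'`. -/
private lemma mainA (h0 : ∀ j (r : R), PowerSeries.constantCoeff (φ j r) = r)
    (hoff : ∀ (i j : Fin m) (k : ℕ), i ≠ j → 1 ≤ k →
      PowerSeries.coeff k ((φ j) (t i)) = 0)
    (e f : Fin m → ℕ) (L : List (Fin m)) (hL : L.Nodup) :
    ∀ c : R, (∃ j ∈ L, f j < e j) → ∃ j' : Fin m, t j' ∣ aL φ f L (c * Tm t e L) := by
  induction L with
  | nil => intro c ⟨j, hj, _⟩; exact absurd hj List.not_mem_nil
  | cons j L ih =>
    intro c ⟨j0, hj0, hlt⟩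
    have hnd := List.nodup_cons.mp hL
    have hTm : Tm t e (j :: L) = t j ^ e j * Tm t e L := by simp [Tm, List.map_cons]
    have h1 : c * Tm t e (j :: L) = (c * t j ^ e j) * Tm t e L := by rw [hTm]; ring
    rw [aL_cons, h1, Dv_mul_Tm h0 hoff e _ L hnd.1]
    rcases List.mem_cons.mp hj0 with h | h
    · refine ⟨j, aL_dvd h0 hoff f L hnd.1 _ ?_⟩
      exact Dvd.dvd.mul_right (Dv_low h0 j (e j) (f j) (h ▸ hlt) c) _
    · exact ih hnd.2 (Dv φ j (f j) (c * t j ^ e j)) ⟨j0, h, hlt⟩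

/-- Main Lemma B: applying the derivations at exactly the exponents recovers the
coefficient modulo `𝔪`. -/
private lemma mainB (h0 : ∀ j (r : R), PowerSeries.constantCoeff (φ j r) = r)
    (hoff : ∀ (i j : Fin m) (k : ℕ), i ≠ j → 1 ≤ k →
      PowerSeries.coeff k ((φ j) (t i)) = 0)
    (hδ : ∀ i j : Fin m, PowerSeries.coeff 1 ((φ j) (t i)) = if i = j then 1 else 0)
    (f : Fin m → ℕ) (L : List (Fin m)) (hL : L.Nodup) :
    ∀ c : R, aL φ f L (c * Tm t f L) - c ∈ Ideal.span (Set.range t) := by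
  induction L with
  | nil =>
    intro c
    have : aL φ f [] (c * Tm t f []) - c = 0 := by simp [aL, Tm]
    rw [this]; exact zero_mem _
  | cons j L ih =>
    intro c
    have hnd := List.nodup_cons.mp hL
    have hTm : Tm t f (j :: L) = t j ^ f j * Tm t f L := by simp [Tm, List.map_cons]
    have h1 : c * Tm t f (j :: L) = (c * t j ^ f j) * Tm t f L := by rw [hTm]; ring
    rw [aL_cons, h1, Dv_mul_Tm h0 hoff f _ L hnd.1]
    set s : R := Dv φ j (f j) (c * t j ^ f j) - c with hs
    have hdvd : t j ∣ s := Dv_exact h0 hδ j (f j) c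
    have h2 : Dv φ j (f j) (c * t j ^ f j) * Tm t f L = c * Tm t f L + s * Tm t f L := by
      rw [hs]; ring
    rw [h2, aL_add]
    have h3 : aL φ f L (c * Tm t f L) + aL φ f L (s * Tm t f L) - c =
        (aL φ f L (c * Tm t f L) - c) + aL φ f L (s * Tm t f L) := by ring
    rw [h3]
    refine add_mem (ih hnd.2 c) ?_
    obtain ⟨z, hz⟩ := aL_dvd h0 hoff f L hnd.1 (s * Tm t f L) (hdvd.mul_right _)
    rw [hz]
    exact Ideal.mul_mem_right z _ (Ideal.subset_span ⟨j, rfl⟩)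

/-- Rewriting `multiComp` as a fold of applications. -/
private lemma multiComp_eq_aL (k : Fin m → ℕ) (r : R) :
    multiComp (fun j i x => PowerSeries.coeff i ((φ j) x)) k r
      = aL φ k (List.finRange m) r := by
  have key : ∀ (L : List (R → R)) (f0 : R → R) (x : R),
      (L.foldl (fun f u => u ∘ f) f0) x = L.foldl (fun y u => u y) (f0 x) := by
    intro L
    induction L with
    | nil => intro f0 x; rfl
    | cons g L ih => intro f0 x; exact ih (g ∘ f0) x
  rw [multiComp, key, List.ofFn_eq_map, List.foldl_map]
  rfl

/-- Every element of `(Set.range t) ^ E` is a monomial of total degree `E`. -/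
private lemma monomialize {E : ℕ} {x : R} (hx : x ∈ (Set.range t) ^ E) :
    ∃ e : Fin m → ℕ, (∑ j, e j) = E ∧ Tm t e (List.finRange m) = x := by
  obtain ⟨g, hg⟩ := Set.mem_pow.mp hx
  have hch : ∀ i : Fin E, ∃ j : Fin m, t j = (g i : R) := fun i => (g i).2
  choose idx hidx using hch
  classical
  refine ⟨fun j => (Finset.univ.filter fun i => idx i = j).card, ?_, ?_⟩
  · rw [← Finset.card_eq_sum_card_fiberwise (fun i _ => Finset.mem_univ (idx i))]
    simp
  · have h2 : ∀ j : Fin m, t j ^ (Finset.univ.filter fun i => idx i = j).card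
        = ∏ i ∈ Finset.univ.filter fun i => idx i = j, t (idx i) := by
      intro j
      rw [Finset.prod_congr rfl (fun i hi => by rw [(Finset.mem_filter.mp hi).2]),
        Finset.prod_const]
    calc Tm t (fun j => (Finset.univ.filter fun i => idx i = j).card) (List.finRange m)
        = ∏ j : Fin m, t j ^ (Finset.univ.filter fun i => idx i = j).card := by
          rw [Tm, ← List.ofFn_eq_map, List.prod_ofFn]
      _ = ∏ j : Fin m, ∏ i ∈ Finset.univ.filter fun i => idx i = j, t (idx i) :=
          Finset.prod_congr rfl fun j _ => h2 j
      _ = ∏ i : Fin E, t (idx i) := Finset.prod_fiberwise _ _ _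
      _ = (List.ofFn fun i => ((g i : R))).prod := by
          rw [List.prod_ofFn]; exact Finset.prod_congr rfl fun i _ => hidx i
      _ = x := hg

end Aux

/-- Let `(R, 𝔪)` be a regular local ring of dimension `m` over `K`
with `𝔪 = (t₁, …, t_m)`, equipped with pairwise commuting iterative derivations
`φ_{t_j}` with `φ_{t_j}^{(1)}(t_i) = δ_{ij}` and `φ_{t_j}^{(k)}(t_i) = 0` for `i ≠ j`,
`k ≥ 1`. Then every `r ≠ 0` admits `(k₁,…,k_m)` such that the corresponding composite of
components applied to `r` is a unit, while any strictly smaller multi-index yields a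
non-unit. -/
theorem regular_local_invertible_derivative {K R : Type*} [Field K] [CommRing R]
    [IsDomain R] [IsLocalRing R] [IsNoetherianRing R] [Algebra K R]
    (m : ℕ) (t : Fin m → R)
    (hspan : Ideal.span (Set.range t) = IsLocalRing.maximalIdeal R)
    (hdim : ringKrullDim R = m)
    (φ : Fin m → (R →ₐ[K] PowerSeries R))
    (h0 : ∀ j (r : R), PowerSeries.constantCoeff (φ j r) = r)
    (hiter : ∀ j (i i' : ℕ) (r : R),
      PowerSeries.coeff i ((φ j) (PowerSeries.coeff i' ((φ j) r))) =
        (((i + i').choose i : K)) • PowerSeries.coeff (i + i') ((φ j) r))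
    (hcomm : ∀ (j j' : Fin m) (i i' : ℕ) (r : R),
      PowerSeries.coeff i ((φ j) (PowerSeries.coeff i' ((φ j') r))) =
        PowerSeries.coeff i' ((φ j') (PowerSeries.coeff i ((φ j) r))))
    (hδ : ∀ i j : Fin m, PowerSeries.coeff 1 ((φ j) (t i)) = if i = j then 1 else 0)
    (hoff : ∀ (i j : Fin m) (k : ℕ), i ≠ j → 1 ≤ k →
      PowerSeries.coeff k ((φ j) (t i)) = 0) :
    ∀ r : R, r ≠ 0 →
      ∃ k : Fin m → ℕ,
        IsUnit (multiComp (fun j i x => PowerSeries.coeff i ((φ j) x)) k r) ∧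
        ∀ l : Fin m → ℕ, (∀ j, l j ≤ k j) → (∃ j, l j < k j) →
          ¬ IsUnit (multiComp (fun j i x => PowerSeries.coeff i ((φ j) x)) l r) := by
  classical
  intro r hr
  set 𝔪 := IsLocalRing.maximalIdeal R with h𝔪
  -- Step 1: find E with r ∈ 𝔪^E, r ∉ 𝔪^(E+1)
  have hbot : ⨅ i : ℕ, 𝔪 ^ i = ⊥ :=
    Ideal.iInf_pow_eq_bot_of_isLocalRing 𝔪 (Ideal.IsMaximal.ne_top inferInstance)
  have hex : ∃ n : ℕ, r ∉ 𝔪 ^ (n + 1) := by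
    by_contra h
    push_neg at h
    have : r ∈ ⨅ i : ℕ, 𝔪 ^ i := by
      rw [Ideal.mem_iInf]
      intro i
      cases i with
      | zero => simp
      | succ n => exact h n
    rw [hbot] at this
    exact hr this
  set E := Nat.find hex with hE
  have hnotin : r ∉ 𝔪 ^ (E + 1) := Nat.find_spec hex
  have hin : r ∈ 𝔪 ^ E := by
    cases hE' : E with
    | zero => simp
    | succ n =>
      have := Nat.find_min hex (by omega : n < E)
      simpa using this
  -- Step 2: write r as a combination of monomials of degree E
  have hin' : r ∈ Submodule.span R ((Set.range t) ^ E) := by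
    rw [← Submodule.span_pow]
    show r ∈ Ideal.span (Set.range t) ^ E
    rw [hspan]
    exact hin
  obtain ⟨c, hsupp, hsum⟩ := Submodule.mem_span_set.mp hin'
  -- choose exponents for each monomial
  have hmono : ∀ x ∈ c.support, ∃ e : Fin m → ℕ,
      (∑ j, e j) = E ∧ Tm t e (List.finRange m) = x := by
    intro x hx
    exact monomialize (hsupp hx)
  choose! ev hev1 hev2 using hmono
  -- Step 3: some coefficient is a unit
  have hunit : ∃ x0 ∈ c.support, c x0 ∉ 𝔪 := by
    by_contra h
    push_neg at h
    apply hnotin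
    rw [← hsum]
    rw [Finsupp.sum]
    apply Ideal.sum_mem
    intro x hx
    have hx𝔪E : x ∈ 𝔪 ^ E := by
      have h2 : x ∈ Submodule.span R ((Set.range t) ^ E) := Submodule.subset_span (hsupp hx)
      rw [← Submodule.span_pow] at h2
      rw [← hspan]
      exact h2
    show (c x) • x ∈ 𝔪 ^ (E + 1)
    rw [smul_eq_mul, mul_comm, pow_succ]
    exact Ideal.mul_mem_mul hx𝔪E (h x hx)
  obtain ⟨x0, hx0, hcx0⟩ := hunit
  set f := ev x0 with hf
  -- Step 4: applying aL at f to r gives a unit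
  have key : aL φ f (List.finRange m) r ∉ 𝔪 := by
    -- additivity over the sum
    have hradd : aL φ f (List.finRange m) r
        = ∑ x ∈ c.support, aL φ f (List.finRange m) ((c x) • x) := by
      rw [← hsum, Finsupp.sum]
      induction c.support using Finset.induction with
      | empty => simpa using aL_zero f (List.finRange m)
      | insert _ _ hnot ih =>
        rw [Finset.sum_insert hnot, Finset.sum_insert hnot, aL_add, ih]
    rw [hradd, ← Finset.add_sum_erase _ _ hx0]
    -- main term
    have hmain : aL φ f (List.finRange m) ((c x0) • x0) - c x0 ∈ 𝔪 := by
      have : (c x0) • x0 = c x0 * Tm t f (List.finRange m) := by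
        rw [smul_eq_mul, hev2 x0 hx0]
      rw [this, ← hspan]
      exact mainB h0 hoff hδ f (List.finRange m) (List.nodup_finRange m) (c x0)
    -- other terms
    have hrest : ∀ x ∈ c.support.erase x0, aL φ f (List.finRange m) ((c x) • x) ∈ 𝔪 := by
      intro x hx
      have hxs := Finset.mem_of_mem_erase hx
      have hxne : x ≠ x0 := Finset.ne_of_mem_erase hx
      have hene : ev x ≠ f := by
        intro h
        apply hxne
        rw [← hev2 x hxs, ← hev2 x0 hx0, h]
      have hlt : ∃ j, f j < ev x j := by
        by_contra h
        push_neg at h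
        apply hene
        funext j
        by_contra hj
        have hj' : ev x j < f j := lt_of_le_of_ne (h j) hj
        have hsumlt : (∑ j, ev x j) < ∑ j, f j :=
          Finset.sum_lt_sum (fun i _ => h i) ⟨j, Finset.mem_univ j, hj'⟩
        rw [hev1 x hxs, hf, hev1 x0 hx0] at hsumlt
        omega
      have hlt' : ∃ j ∈ List.finRange m, f j < ev x j := by
        obtain ⟨j, hj⟩ := hlt
        exact ⟨j, List.mem_finRange j, hj⟩
      have : (c x) • x = c x * Tm t (ev x) (List.finRange m) := by
        rw [smul_eq_mul, hev2 x hxs]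
      rw [this]
      obtain ⟨j', z, hz⟩ := mainA h0 hoff (ev x) f (List.finRange m)
        (List.nodup_finRange m) (c x) hlt'
      rw [hz, ← hspan]
      exact Ideal.mul_mem_right z _ (Ideal.subset_span ⟨j', rfl⟩)
    intro hmem
    apply hcx0
    have hS : (∑ x ∈ c.support.erase x0, aL φ f (List.finRange m) ((c x) • x)) ∈ 𝔪 :=
      Ideal.sum_mem _ hrest
    have h1 : (c x0 : R) = (aL φ f (List.finRange m) ((c x0) • x0)
        + ∑ x ∈ c.support.erase x0, aL φ f (List.finRange m) ((c x) • x))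
        - (∑ x ∈ c.support.erase x0, aL φ f (List.finRange m) ((c x) • x))
        - (aL φ f (List.finRange m) ((c x0) • x0) - c x0) := by ring
    rw [h1]
    exact sub_mem (sub_mem hmem hS) hmain
  -- Step 5: conclude with a minimal multi-index
  have hPex : ∃ n : ℕ, ∃ k : Fin m → ℕ, (∑ j, k j) = n ∧
      IsUnit (multiComp (fun j i x => PowerSeries.coeff i ((φ j) x)) k r) := by
    refine ⟨∑ j, f j, f, rfl, ?_⟩
    rw [multiComp_eq_aL]
    exact IsLocalRing.notMem_maximalIdeal.mp key
  set N := Nat.find hPex with hN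
  obtain ⟨k, hk, hku⟩ := Nat.find_spec hPex
  refine ⟨k, hku, ?_⟩
  intro l hle hlt
  intro hul
  obtain ⟨j, hj⟩ := hlt
  have hsumlt : (∑ j, l j) < ∑ j, k j :=
    Finset.sum_lt_sum (fun i _ => hle i) ⟨j, Finset.mem_univ j, hj⟩
  rw [hk] at hsumlt
  exact Nat.find_min hPex hsumlt ⟨l, rfl, hul⟩
end

section
/- Let (R, 𝔪) be a regular local ring over a field K equipped with commuting iterative derivations φ_{t₁},…,φ_{t_m} as in the lemma on invertible derivatives (φ_{t_j}^(1)(t_i) = δ_{ij} on a regular system of parameters). Let M be a finitely generated R-module equipped, for each j, with an additive map Φ_j : M → M[[T]] such that Φ_j(rm) = φ_{t_j}(r)·Φ_j(m) and Φ_j^(0) = id_M. Then M is a free R-module; more precisely, any minimal generating set of M is a basis. -/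
open PowerSeries

namespace ModHCAux

universe u

variable {R : Type u} [CommRing R]

noncomputable def Dcomp : ∀ {m : ℕ}, (Fin m → R →+* PowerSeries R) → (Fin m → ℕ) → R → R
  | 0, _, _, r => r
  | _ + 1, φ, k, r =>
      PowerSeries.coeff (k 0) (φ 0 (Dcomp (fun j => φ j.succ) (fun j => k j.succ) r))

theorem Dcomp_mem (I : Ideal R) :
    ∀ {m : ℕ} (φ : Fin m → R →+* PowerSeries R)
      (_ : ∀ j k r, r ∈ I → PowerSeries.coeff (R := R) k (φ j r) ∈ I)
      (k : Fin m → ℕ) (r : R), r ∈ I → Dcomp φ k r ∈ I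
  | 0, _, _, _, _, hr => hr
  | _ + 1, φ, hI, k, r, hr =>
      hI 0 (k 0) _ (Dcomp_mem I (fun j => φ j.succ) (fun j k r h => hI j.succ k r h) _ _ hr)

theorem Dcomp_quot {S : Type u} [CommRing S] (f : R →+* S) :
    ∀ {m : ℕ} (φ : Fin m → R →+* PowerSeries R) (φ' : Fin m → S →+* PowerSeries S)
      (_ : ∀ j k y, PowerSeries.coeff (R := S) k (φ' j (f y)) = f (PowerSeries.coeff (R := R) k (φ j y)))
      (k : Fin m → ℕ) (y : R),
      Dcomp φ' k (f y) = f (Dcomp φ k y)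
  | 0, _, _, _, _, _ => rfl
  | m + 1, φ, φ', h, k, y => by
      simp only [Dcomp]
      rw [Dcomp_quot f (fun j => φ j.succ) (fun j => φ' j.succ)
        (fun j k y => h j.succ k y) (fun j => k j.succ) y, h 0]

theorem Dcomp_mul_const (c : R) :
    ∀ {m : ℕ} (φ : Fin m → R →+* PowerSeries R)
      (_ : ∀ j k y, PowerSeries.coeff (R := R) k (φ j (c * y)) = c * PowerSeries.coeff (R := R) k (φ j y))
      (k : Fin m → ℕ) (y : R),
      Dcomp φ k (c * y) = c * Dcomp φ k y
  | 0, _, _, _, _ => rfl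
  | m + 1, φ, h, k, y => by
      simp only [Dcomp]
      rw [Dcomp_mul_const c (fun j => φ j.succ) (fun j k y => h j.succ k y) (fun j => k j.succ) y,
        h 0]

theorem Dleibniz (φ : R →+* PowerSeries R) (k : ℕ) (a b : R) :
    PowerSeries.coeff (R := R) k (φ (a * b)) =
      ∑ p ∈ Finset.HasAntidiagonal.antidiagonal k,
        PowerSeries.coeff (R := R) p.1 (φ a) * PowerSeries.coeff (R := R) p.2 (φ b) := by
  rw [map_mul, PowerSeries.coeff_mul]

theorem Dpow_zero (φ : R →+* PowerSeries R) (x : R)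
    (hx : ∀ k, 1 ≤ k → PowerSeries.coeff (R := R) k (φ x) = 0) :
    ∀ (a p : ℕ), 1 ≤ p → PowerSeries.coeff (R := R) p (φ (x ^ a)) = 0 := by
  intro a
  induction a with
  | zero =>
    intro p hp
    simp only [pow_zero, map_one]
    rw [PowerSeries.coeff_one, if_neg (by omega)]
  | succ a ih =>
    intro p hp
    rw [pow_succ, mul_comm, Dleibniz]
    refine Finset.sum_eq_zero fun q hq => ?_
    rcases Nat.eq_zero_or_pos q.1 with h1 | h1
    · have h2 : q.2 = p := by have := Finset.HasAntidiagonal.mem_antidiagonal.mp hq; omega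
      rw [h2, ih p hp, mul_zero]
    · rw [hx q.1 h1, zero_mul]

theorem Dstep (φ : R →+* PowerSeries R) (x : R)
    (h0 : ∀ r : R, PowerSeries.constantCoeff (R := R) (φ r) = r)
    (h1 : PowerSeries.coeff (R := R) 1 (φ x) = 1) :
    ∀ (a u : ℕ), u ≤ a →
      PowerSeries.coeff (R := R) u (φ (x ^ a)) - (if u = a then 1 else 0) ∈ Ideal.span {x} := by
  intro a
  induction a with
  | zero =>
    intro u hu
    interval_cases u
    rw [pow_zero, map_one, show PowerSeries.coeff (R := R) 0 (1 : PowerSeries R) = (1:R) by simp,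
      if_pos rfl, sub_self]
    exact Submodule.zero_mem _
  | succ a ih =>
    intro u hu
    rw [pow_succ, mul_comm, Dleibniz]
    have hsum : (if u = a + 1 then (1 : R) else 0) =
        ∑ q ∈ Finset.HasAntidiagonal.antidiagonal u, (if q = ((1 : ℕ), a) then (1 : R) else 0) := by
      rw [Finset.sum_ite_eq' (Finset.HasAntidiagonal.antidiagonal u) ((1 : ℕ), a) (fun _ => (1 : R))]
      simp only [Finset.HasAntidiagonal.mem_antidiagonal]
      by_cases h : u = a + 1
      · rw [if_pos h, if_pos (by omega)]
      · rw [if_neg h, if_neg (by omega)]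
    rw [hsum, ← Finset.sum_sub_distrib]
    refine Ideal.sum_mem _ fun q hq => ?_
    obtain ⟨p, v⟩ := q
    have hq' : p + v = u := Finset.HasAntidiagonal.mem_antidiagonal.mp hq
    simp only [Prod.mk.injEq]
    rcases Nat.lt_trichotomy p 1 with hlt | heq | hgt
    · have hp0 : p = 0 := by omega
      subst hp0
      rw [if_neg (by simp), sub_zero, PowerSeries.coeff_zero_eq_constantCoeff, h0]
      exact Ideal.mul_mem_right _ _ (Ideal.subset_span rfl)
    · subst heq
      rw [h1, one_mul, show (if 1 = 1 ∧ v = a then (1:R) else 0) = (if v = a then (1:R) else 0)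
        by by_cases h : v = a <;> simp [h]]
      exact ih v (by omega)
    · have hlt2 : v < a := by omega
      have h3 := ih v (le_of_lt hlt2)
      rw [if_neg (by omega : v ≠ a), sub_zero] at h3
      rw [if_neg (by omega), sub_zero]
      exact Ideal.mul_mem_left _ _ h3

theorem keyB (m : ℕ) :
    ∀ (R : Type u) [CommRing R] [IsLocalRing R] [IsNoetherianRing R]
      (t : Fin m → R) (_ : Ideal.span (Set.range t) = IsLocalRing.maximalIdeal R)
      (φ : Fin m → R →+* PowerSeries R)
      (_ : ∀ j (r : R), PowerSeries.constantCoeff (R := R) (φ j r) = r)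
      (_ : ∀ j, PowerSeries.coeff (R := R) 1 (φ j (t j)) = 1)
      (_ : ∀ (i j : Fin m) (k : ℕ), i ≠ j → 1 ≤ k → PowerSeries.coeff (R := R) k (φ j (t i)) = 0)
      (r : R), (∀ k : Fin m → ℕ, Dcomp φ k r ∈ IsLocalRing.maximalIdeal R) → r = 0 := by
  induction m with
  | zero =>
    intro R _ _ _ t hspan φ _ _ _ r hr
    have h1 : r ∈ IsLocalRing.maximalIdeal R := hr (fun j => j.elim0)
    rw [← hspan, Set.range_eq_empty, Ideal.span_empty] at h1
    exact (Submodule.mem_bot R).mp h1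
  | succ m ih =>
    intro R _ _ _ t hspan φ h0 hδ hoff r hr
    set x := t 0 with hx
    set J : Ideal R := Ideal.span {x} with hJ
    have hxm : x ∈ IsLocalRing.maximalIdeal R := by
      rw [← hspan]; exact Ideal.subset_span ⟨0, rfl⟩
    have hJm : J ≤ IsLocalRing.maximalIdeal R := by
      rw [hJ, Ideal.span_le, Set.singleton_subset_iff]; exact hxm
    have hJtop : J ≠ ⊤ := fun h => (IsLocalRing.maximalIdeal.isMaximal R).ne_top
      (top_le_iff.mp (h ▸ hJm))
    letI : Nontrivial (R ⧸ J) := Ideal.Quotient.nontrivial_iff.mpr hJtop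
    letI : IsLocalRing (R ⧸ J) :=
      IsLocalRing.of_surjective' (Ideal.Quotient.mk J) Ideal.Quotient.mk_surjective
    set mk : R →+* R ⧸ J := Ideal.Quotient.mk J with hmkdef
    -- mk maps the maximal ideal into the maximal ideal
    have hmkm : ∀ z ∈ IsLocalRing.maximalIdeal R, mk z ∈ IsLocalRing.maximalIdeal (R ⧸ J) := by
      intro z hz
      rw [IsLocalRing.mem_maximalIdeal] at *
      intro hu
      obtain ⟨b, hb⟩ := isUnit_iff_exists_inv.mp hu
      obtain ⟨w, rfl⟩ := Ideal.Quotient.mk_surjective b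
      have hmem : z * w - 1 ∈ J := by
        rw [← Ideal.Quotient.eq_zero_iff_mem, map_sub, map_mul, map_one, hb, sub_self]
      have h1m : (1 : R) ∈ IsLocalRing.maximalIdeal R := by
        have := Submodule.sub_mem _ (Ideal.mul_mem_right w _ hz) (hJm hmem)
        simpa using this
      exact (IsLocalRing.maximalIdeal.isMaximal R).ne_top ((Ideal.eq_top_iff_one _).mpr h1m)
    -- data on the quotient
    set t' : Fin m → R ⧸ J := fun i => mk (t i.succ) with ht'
    have hψJ : ∀ j : Fin m, ∀ a ∈ J, (PowerSeries.map mk).comp (φ j.succ) a = 0 := by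
      intro j a ha
      obtain ⟨c, rfl⟩ := Ideal.mem_span_singleton'.mp ha
      have hψx : (PowerSeries.map mk) (φ j.succ x) = 0 := by
        ext n
        rw [PowerSeries.coeff_map, map_zero]
        rcases Nat.eq_zero_or_pos n with h | h
        · subst h
          rw [PowerSeries.coeff_zero_eq_constantCoeff, h0]
          exact Ideal.Quotient.eq_zero_iff_mem.mpr (Ideal.subset_span rfl)
        · rw [hoff 0 j.succ n (Fin.succ_ne_zero j).symm h, map_zero]
      simp only [RingHom.comp_apply, map_mul, hψx, mul_zero]
    set φ' : Fin m → (R ⧸ J) →+* PowerSeries (R ⧸ J) :=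
      fun j => Ideal.Quotient.lift J ((PowerSeries.map mk).comp (φ j.succ)) (hψJ j) with hφ'
    have hcompat : ∀ (j : Fin m) (k : ℕ) (y : R),
        PowerSeries.coeff (R := R ⧸ J) k (φ' j (mk y)) = mk (PowerSeries.coeff (R := R) k (φ j.succ y)) := by
      intro j k y
      simp only [hφ', hmkdef, Ideal.Quotient.lift_mk, RingHom.comp_apply, PowerSeries.coeff_map]
    have h0' : ∀ (j : Fin m) (r' : R ⧸ J), PowerSeries.constantCoeff (R := R ⧸ J) (φ' j r') = r' := by
      intro j r'
      obtain ⟨y, rfl⟩ := Ideal.Quotient.mk_surjective r'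
      rw [← PowerSeries.coeff_zero_eq_constantCoeff, hcompat,
        PowerSeries.coeff_zero_eq_constantCoeff, h0]
    have hδ' : ∀ j : Fin m, PowerSeries.coeff (R := R ⧸ J) 1 (φ' j (t' j)) = 1 := by
      intro j
      rw [ht', hcompat, hδ j.succ, map_one]
    have hoff' : ∀ (i j : Fin m) (k : ℕ), i ≠ j → 1 ≤ k →
        PowerSeries.coeff (R := R ⧸ J) k (φ' j (t' i)) = 0 := by
      intro i j k hij hk
      rw [ht', hcompat, hoff i.succ j.succ k (fun h => hij (Fin.succ_injective m h)) hk, map_zero]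
    have hspan' : Ideal.span (Set.range t') = IsLocalRing.maximalIdeal (R ⧸ J) := by
      have hmap : Ideal.map mk (IsLocalRing.maximalIdeal R) = IsLocalRing.maximalIdeal (R ⧸ J) := by
        apply le_antisymm
        · rw [Ideal.map_le_iff_le_comap]
          intro z hz
          exact hmkm z hz
        · intro y hy
          obtain ⟨z, rfl⟩ := Ideal.Quotient.mk_surjective y
          have hz : z ∈ IsLocalRing.maximalIdeal R := by
            rw [IsLocalRing.mem_maximalIdeal, mem_nonunits_iff]
            intro hu
            exact mem_nonunits_iff.mp ((IsLocalRing.mem_maximalIdeal _).mp hy) (hu.map mk)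
          exact Ideal.mem_map_of_mem mk hz
      rw [← hmap, ← hspan, Ideal.map_span, ← Set.range_comp]
      have hrange : Set.range (mk ∘ t) = insert (0 : R ⧸ J) (Set.range t') := by
        rw [Fin.range_fin_succ (mk ∘ t)]
        congr 1
        exact Ideal.Quotient.eq_zero_iff_mem.mpr (Ideal.subset_span rfl)
      rw [hrange]
      exact (Submodule.span_insert_zero).symm
    -- quotient criterion
    have hquot : ∀ s : R,
        (∀ k' : Fin m → ℕ, Dcomp (fun j => φ j.succ) k' s ∈ IsLocalRing.maximalIdeal R) →
        s ∈ J := by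
      intro s hs
      have hmk0 : mk s = 0 := by
        refine ih (R ⧸ J) t' hspan' φ' h0' hδ' hoff' (mk s) (fun k' => ?_)
        rw [Dcomp_quot mk (fun j => φ j.succ) φ' hcompat k' s]
        exact hmkm _ (hs k')
      exact Ideal.Quotient.eq_zero_iff_mem.mp hmk0
    -- multiplication by powers of x commutes with the other derivations
    have hpowmul : ∀ (a : ℕ) (j : Fin m) (k : ℕ) (y : R),
        PowerSeries.coeff (R := R) k (φ j.succ (x ^ a * y)) =
          x ^ a * PowerSeries.coeff (R := R) k (φ j.succ y) := by
      intro a j k y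
      rw [Dleibniz]
      rw [Finset.sum_eq_single ((0 : ℕ), k)]
      · rw [PowerSeries.coeff_zero_eq_constantCoeff, h0]
      · intro q hq hne
        have hq' := Finset.HasAntidiagonal.mem_antidiagonal.mp hq
        have h1 : 1 ≤ q.1 := by
          rcases Nat.eq_zero_or_pos q.1 with h | h
          · exfalso; apply hne; have : q.2 = k := by omega
            exact Prod.ext h this
          · exact h
        rw [Dpow_zero (φ j.succ) x (fun k hk => hoff 0 j.succ k (Fin.succ_ne_zero j).symm hk) a
          q.1 h1, zero_mul]
      · intro h
        exact absurd (Finset.HasAntidiagonal.mem_antidiagonal.mpr (by omega)) h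
    -- main induction: r ∈ J ^ a for all a
    have hstep : ∀ a : ℕ, r ∈ J ^ a := by
      intro a
      induction a with
      | zero => simpa using Submodule.mem_top
      | succ a iha =>
        rw [hJ, Ideal.span_singleton_pow] at iha
        obtain ⟨s, hs⟩ := Ideal.mem_span_singleton'.mp iha
        have hsJ : s ∈ J := by
          apply hquot
          intro k'
          set w := Dcomp (fun j => φ j.succ) k' s with hw
          have hmain := hr (Fin.cons a k')
          have hD : Dcomp φ (Fin.cons a k') r = PowerSeries.coeff (R := R) a (φ 0 (x ^ a * w)) := by
            simp only [Dcomp, Fin.cons_zero, Fin.cons_succ]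
            congr 1
            rw [← hs, mul_comm s (x ^ a),
              Dcomp_mul_const (x ^ a) (fun j => φ j.succ) (fun j k y => hpowmul a j k y) k' s]
          rw [hD] at hmain
          have hsub : PowerSeries.coeff (R := R) a (φ 0 (x ^ a * w)) - w ∈
              IsLocalRing.maximalIdeal R := by
            have hgsum : ∑ q ∈ Finset.HasAntidiagonal.antidiagonal a,
                (if q = ((a : ℕ), (0 : ℕ)) then w else 0) = w := by
              rw [Finset.sum_ite_eq' (Finset.HasAntidiagonal.antidiagonal a) ((a : ℕ), (0 : ℕ)) (fun _ => w),
                if_pos (Finset.HasAntidiagonal.mem_antidiagonal.mpr (by omega))]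
            have hEq : PowerSeries.coeff (R := R) a (φ 0 (x ^ a * w)) - w
                = ∑ q ∈ Finset.HasAntidiagonal.antidiagonal a,
                    (PowerSeries.coeff (R := R) q.1 (φ 0 (x ^ a)) * PowerSeries.coeff (R := R) q.2 (φ 0 w)
                      - if q = ((a : ℕ), (0 : ℕ)) then w else 0) := by
              rw [Finset.sum_sub_distrib, hgsum, ← Dleibniz]
            rw [hEq]
            refine Ideal.sum_mem _ fun q hq => ?_
            obtain ⟨p, v⟩ := q
            have hq' : p + v = a := Finset.HasAntidiagonal.mem_antidiagonal.mp hq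
            by_cases hp : p = a
            · have hv : v = 0 := by omega
              subst hp; subst hv
              rw [if_pos rfl, PowerSeries.coeff_zero_eq_constantCoeff, h0]
              have hD1 := Dstep (φ 0) x (h0 0) (hδ 0) p p le_rfl
              rw [if_pos rfl] at hD1
              have : PowerSeries.coeff (R := R) p (φ 0 (x ^ p)) * w - w =
                  (PowerSeries.coeff (R := R) p (φ 0 (x ^ p)) - 1) * w := by ring
              rw [this]
              exact hJm (Ideal.mul_mem_right _ _ hD1)
            · rw [if_neg (by simp [hp]), sub_zero]
              have hD1 := Dstep (φ 0) x (h0 0) (hδ 0) a p (by omega)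
              rw [if_neg hp, sub_zero] at hD1
              exact hJm (Ideal.mul_mem_right _ _ hD1)
          have : w = PowerSeries.coeff (R := R) a (φ 0 (x ^ a * w)) -
              (PowerSeries.coeff (R := R) a (φ 0 (x ^ a * w)) - w) := by ring
          rw [this]
          exact Submodule.sub_mem _ hmain hsub
        obtain ⟨c, hc⟩ := Ideal.mem_span_singleton'.mp hsJ
        rw [hJ, Ideal.span_singleton_pow]
        exact Ideal.mem_span_singleton'.mpr ⟨c, by rw [← hs, ← hc]; ring⟩
    have hbot : (⨅ a : ℕ, J ^ a) = ⊥ := Ideal.iInf_pow_eq_bot_of_isLocalRing J hJtop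
    have : r ∈ (⊥ : Ideal R) := hbot ▸ (Submodule.mem_iInf _).mpr hstep
    exact (Submodule.mem_bot R).mp this

end ModHCAux

/-- Over a regular local ring `(R, 𝔪)` with commuting iterative
derivations `φ_{t_j}` as in the lemma on invertible derivatives, every finitely
generated `R`-module `M` equipped with compatible higher derivations `Φ_j` (additive,
`Φ_j^{(0)} = id`, and `Φ_j(rm) = φ_{t_j}(r)·Φ_j(m)` componentwise) is free; more
precisely, any minimal generating family of `M` is linearly independent (hence a
basis). -/
theorem module_with_higher_connection_free {K R : Type*} [Field K] [CommRing R]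
    [IsDomain R] [IsLocalRing R] [IsNoetherianRing R] [Algebra K R]
    (m : ℕ) (t : Fin m → R)
    (hspan : Ideal.span (Set.range t) = IsLocalRing.maximalIdeal R)
    (hdim : ringKrullDim R = m)
    (φ : Fin m → (R →ₐ[K] PowerSeries R))
    (h0 : ∀ j (r : R), PowerSeries.constantCoeff (R := R) (φ j r) = r)
    (hiter : ∀ j (i i' : ℕ) (r : R),
      PowerSeries.coeff (R := R) i ((φ j) (PowerSeries.coeff (R := R) i' ((φ j) r))) =
        (((i + i').choose i : K)) • PowerSeries.coeff (R := R) (i + i') ((φ j) r))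
    (hcomm : ∀ (j j' : Fin m) (i i' : ℕ) (r : R),
      PowerSeries.coeff (R := R) i ((φ j) (PowerSeries.coeff (R := R) i' ((φ j') r))) =
        PowerSeries.coeff (R := R) i' ((φ j') (PowerSeries.coeff (R := R) i ((φ j) r))))
    (hδ : ∀ i j : Fin m, PowerSeries.coeff (R := R) 1 ((φ j) (t i)) = if i = j then 1 else 0)
    (hoff : ∀ (i j : Fin m) (k : ℕ), i ≠ j → 1 ≤ k →
      PowerSeries.coeff (R := R) k ((φ j) (t i)) = 0)
    (M : Type*) [AddCommGroup M] [Module R M] [Module.Finite R M]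
    (Φ : Fin m → ℕ → M → M)
    (hΦadd : ∀ j k (x y : M), Φ j k (x + y) = Φ j k x + Φ j k y)
    (hΦ0 : ∀ j (x : M), Φ j 0 x = x)
    (hΦsmul : ∀ j k (r : R) (x : M),
      Φ j k (r • x) = ∑ p ∈ Finset.HasAntidiagonal.antidiagonal k,
        (PowerSeries.coeff (R := R) p.1 ((φ j) r)) • Φ j p.2 x) :
    Module.Free R M ∧
      ∀ (n : ℕ) (x : Fin n → M), Submodule.span R (Set.range x) = ⊤ →
        (∀ s : Finset (Fin n), Submodule.span R (x '' ↑s) = ⊤ → s = Finset.univ) →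
        LinearIndependent R x := by
  classical
  have key : ∀ (n : ℕ) (x : Fin n → M), Submodule.span R (Set.range x) = ⊤ →
      (∀ s : Finset (Fin n), Submodule.span R (x '' ↑s) = ⊤ → s = Finset.univ) →
      LinearIndependent R x := by
    intro n x hx hmin
    rw [Fintype.linearIndependent_iff]
    intro c hc i
    -- a global choice of coordinates
    have hexists : ∀ v : M, ∃ f : Fin n → R, ∑ l, f l • x l = v := by
      intro v
      have hv : v ∈ Submodule.span R (Set.range x) := by rw [hx]; exact Submodule.mem_top
      exact (Submodule.mem_span_range_iff_exists_fun (R := R)).mp hv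
    choose F hF using hexists
    -- the ideal of coefficients of relations
    set Jrel : Ideal R := Ideal.span
      {r : R | ∃ d : Fin n → R, (∑ l, d l • x l) = 0 ∧ ∃ i0, d i0 = r} with hJrel
    -- Step (a): Jrel is contained in the maximal ideal, by minimality
    have hJm : Jrel ≤ IsLocalRing.maximalIdeal R := by
      rw [hJrel, Ideal.span_le]
      rintro r ⟨d, hd, i0, rfl⟩
      rw [SetLike.mem_coe, IsLocalRing.mem_maximalIdeal, mem_nonunits_iff]
      intro hu
      obtain ⟨u, hu'⟩ := hu
      have h2 : d i0 • x i0 = -∑ l ∈ Finset.univ.erase i0, d l • x l := by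
        rw [eq_neg_iff_add_eq_zero]
        exact (Finset.add_sum_erase Finset.univ (fun l => d l • x l)
          (Finset.mem_univ i0)).trans hd
      have hrepr : x i0 ∈ Submodule.span R (x '' ↑(Finset.univ.erase i0)) := by
        have h3 : x i0 = ∑ l ∈ Finset.univ.erase i0, (-((↑u⁻¹ : R) * d l)) • x l := by
          calc x i0 = (↑u⁻¹ : R) • (d i0 • x i0) := by
                rw [smul_smul, ← hu', Units.inv_mul, one_smul]
            _ = (↑u⁻¹ : R) • (-∑ l ∈ Finset.univ.erase i0, d l • x l) := by rw [h2]
            _ = ∑ l ∈ Finset.univ.erase i0, (-((↑u⁻¹ : R) * d l)) • x l := by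
                rw [smul_neg, Finset.smul_sum, ← Finset.sum_neg_distrib]
                refine Finset.sum_congr rfl fun l _ => ?_
                rw [smul_smul, neg_smul]
        rw [h3]
        exact Submodule.sum_mem _ fun l hl => Submodule.smul_mem _ _
          (Submodule.subset_span ⟨l, by simpa using hl, rfl⟩)
      have hsp : Submodule.span R (x '' ↑(Finset.univ.erase i0)) = ⊤ := by
        rw [eq_top_iff, ← hx, Submodule.span_le]
        rintro v ⟨l, rfl⟩
        by_cases hl : l = i0
        · subst hl; exact hrepr
        · exact Submodule.subset_span ⟨l, by simp [hl], rfl⟩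
      have heq := hmin _ hsp
      have : i0 ∈ Finset.univ.erase i0 := by rw [heq]; exact Finset.mem_univ i0
      exact Finset.notMem_erase i0 _ this
    -- Step (b): stability of Jrel under the derivations, on generators
    have hgen : ∀ (k : ℕ) (j : Fin m) (d : Fin n → R), (∑ l, d l • x l) = 0 →
        ∀ i', PowerSeries.coeff (R := R) k (φ j (d i')) ∈ Jrel := by
      intro k
      induction k using Nat.strong_induction_on with
      | _ k IH =>
      intro j d hd i'
      set e : Fin n → ℕ → Fin n → R :=
        fun l q => if q = 0 then Pi.single l 1 else F (Φ j q (x l)) with he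
      have hexp : ∀ (l : Fin n) (q : ℕ), Φ j q (x l) = ∑ i'', e l q i'' • x i'' := by
        intro l q
        by_cases hq : q = 0
        · subst hq
          simp only [he, if_pos rfl]
          rw [hΦ0]
          rw [Finset.sum_eq_single l]
          · simp
          · intro b _ hb
            rw [Pi.single_eq_of_ne hb, zero_smul]
          · intro h; exact absurd (Finset.mem_univ l) h
        · simp only [he, if_neg hq]
          exact (hF _).symm
      set d' : Fin n → R := fun i'' => ∑ l, ∑ pq ∈ Finset.HasAntidiagonal.antidiagonal k,
        PowerSeries.coeff (R := R) pq.1 (φ j (d l)) * e l pq.2 i'' with hd'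
      have h00 : Φ j k (0 : M) = 0 := by
        have h := hΦadd j k 0 0
        rw [add_zero] at h
        exact (left_eq_add.mp h)
      have hrel : (∑ i'', d' i'' • x i'') = 0 := by
        have h2 : ∀ l, Φ j k (d l • x l) = ∑ pq ∈ Finset.HasAntidiagonal.antidiagonal k, ∑ i'',
            (PowerSeries.coeff (R := R) pq.1 (φ j (d l)) * e l pq.2 i'') • x i'' := by
          intro l
          rw [hΦsmul]
          refine Finset.sum_congr rfl fun pq _ => ?_
          rw [hexp l pq.2, Finset.smul_sum]
          refine Finset.sum_congr rfl fun i'' _ => ?_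
          rw [smul_smul]
        have hmap : Φ j k (∑ l, d l • x l) = ∑ l, Φ j k (d l • x l) :=
          map_sum (AddMonoidHom.mk' (Φ j k) (hΦadd j k)) _ _
        calc ∑ i'', d' i'' • x i''
            = ∑ i'', ∑ l, ∑ pq ∈ Finset.HasAntidiagonal.antidiagonal k,
                (PowerSeries.coeff (R := R) pq.1 (φ j (d l)) * e l pq.2 i'') • x i'' := by
              refine Finset.sum_congr rfl fun i'' _ => ?_
              rw [hd', Finset.sum_smul]
              refine Finset.sum_congr rfl fun l _ => ?_
              rw [Finset.sum_smul]
          _ = ∑ l, ∑ i'', ∑ pq ∈ Finset.HasAntidiagonal.antidiagonal k,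
                (PowerSeries.coeff (R := R) pq.1 (φ j (d l)) * e l pq.2 i'') • x i'' :=
              Finset.sum_comm
          _ = ∑ l, ∑ pq ∈ Finset.HasAntidiagonal.antidiagonal k, ∑ i'',
                (PowerSeries.coeff (R := R) pq.1 (φ j (d l)) * e l pq.2 i'') • x i'' :=
              Finset.sum_congr rfl fun l _ => Finset.sum_comm
          _ = ∑ l, Φ j k (d l • x l) := Finset.sum_congr rfl fun l _ => (h2 l).symm
          _ = Φ j k (∑ l, d l • x l) := hmap.symm
          _ = 0 := by rw [hd, h00]
      have hd'mem : ∀ i'', d' i'' ∈ Jrel :=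
        fun i'' => Ideal.subset_span ⟨d', hrel, i'', rfl⟩
      -- split off the leading term
      have hsplit : d' i' = PowerSeries.coeff (R := R) k (φ j (d i')) +
          ∑ l, ∑ pq ∈ (Finset.HasAntidiagonal.antidiagonal k).erase ((k : ℕ), (0 : ℕ)),
            PowerSeries.coeff (R := R) pq.1 (φ j (d l)) * e l pq.2 i' := by
        have hone : ∀ l, (∑ pq ∈ Finset.HasAntidiagonal.antidiagonal k,
              PowerSeries.coeff (R := R) pq.1 (φ j (d l)) * e l pq.2 i')
            = PowerSeries.coeff (R := R) k (φ j (d l)) * ((Pi.single l (1:R) : Fin n → R) i') +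
              ∑ pq ∈ (Finset.HasAntidiagonal.antidiagonal k).erase ((k : ℕ), (0 : ℕ)),
                PowerSeries.coeff (R := R) pq.1 (φ j (d l)) * e l pq.2 i' := by
          intro l
          have hmem00 : ((k : ℕ), (0 : ℕ)) ∈ Finset.HasAntidiagonal.antidiagonal k := by simp
          rw [← Finset.add_sum_erase (Finset.HasAntidiagonal.antidiagonal k)
            (fun pq => PowerSeries.coeff (R := R) pq.1 (φ j (d l)) * e l pq.2 i') hmem00]
          congr 1
        have hL := Finset.sum_congr rfl (fun l (_ : l ∈ (Finset.univ : Finset (Fin n))) => hone l)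
        simp only [hd']
        rw [hL, Finset.sum_add_distrib]
        congr 1
        rw [Finset.sum_eq_single i']
        · rw [show ((Pi.single i' (1:R) : Fin n → R) i') = 1 from Pi.single_eq_same i' 1, mul_one]
        · intro b _ hb
          rw [Pi.single_eq_of_ne' hb, mul_zero]
        · intro h; exact absurd (Finset.mem_univ i') h
      have hrest : (∑ l, ∑ pq ∈ (Finset.HasAntidiagonal.antidiagonal k).erase ((k : ℕ), (0 : ℕ)),
          PowerSeries.coeff (R := R) pq.1 (φ j (d l)) * e l pq.2 i') ∈ Jrel := by
        refine Ideal.sum_mem _ fun l _ => Ideal.sum_mem _ fun pq hpq => ?_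
        have h1 := Finset.mem_erase.mp hpq
        have h2 := Finset.HasAntidiagonal.mem_antidiagonal.mp h1.2
        have hlt : pq.1 < k := by
          rcases Nat.lt_or_ge pq.1 k with h | h
          · exact h
          · exfalso; apply h1.1
            have hpq1 : pq.1 = k := by omega
            exact Prod.ext hpq1 (by omega)
        exact Ideal.mul_mem_right _ _ (IH pq.1 hlt j d hd l)
      have hmem := hd'mem i'
      rw [hsplit] at hmem
      have hfin := Submodule.sub_mem _ hmem hrest
      simpa using hfin
    -- Step (c): full stability of Jrel
    have hstab : ∀ r ∈ Jrel, ∀ (j : Fin m) (k : ℕ),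
        PowerSeries.coeff (R := R) k (φ j r) ∈ Jrel := by
      intro r hr
      induction hr using Submodule.span_induction with
      | mem y hy =>
        obtain ⟨d, hd, i0, rfl⟩ := hy
        exact fun j k => hgen k j d hd i0
      | zero =>
        intro j k
        rw [map_zero, map_zero]
        exact Submodule.zero_mem _
      | add y z _ _ hy hz =>
        intro j k
        rw [map_add, map_add]
        exact Submodule.add_mem _ (hy j k) (hz j k)
      | smul a y _ hy =>
        intro j k
        rw [smul_eq_mul, map_mul, PowerSeries.coeff_mul]
        exact Ideal.sum_mem _ fun q _ => Ideal.mul_mem_left _ _ (hy j q.2)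
    -- Step (d): conclude via keyB
    have hcJ : ∀ i0, c i0 ∈ Jrel := fun i0 => Ideal.subset_span ⟨c, hc, i0, rfl⟩
    refine ModHCAux.keyB m R t hspan (fun j => (φ j).toRingHom) h0
      (fun j => by have := hδ j j; rwa [if_pos rfl] at this) hoff (c i) ?_
    intro k
    exact hJm (ModHCAux.Dcomp_mem Jrel (fun j => (φ j).toRingHom)
      (fun j k r hr => hstab r hr j k) k (c i) (hcJ i))
  refine ⟨?_, key⟩
  -- freeness: pick a generating family of minimal size
  obtain ⟨n0, v0, hv0⟩ := Module.Finite.exists_fin (R := R) (M := M)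
  have hPex : ∃ n, ∃ v : Fin n → M, Submodule.span R (Set.range v) = ⊤ := ⟨n0, v0, hv0⟩
  obtain ⟨v, hv⟩ := Nat.find_spec hPex
  have hmin : ∀ s : Finset (Fin (Nat.find hPex)),
      Submodule.span R (v '' ↑s) = ⊤ → s = Finset.univ := by
    intro s hs
    by_contra hne
    have hcard : s.card < Nat.find hPex := by
      have hss : s ⊂ Finset.univ := Finset.ssubset_univ_iff.mpr hne
      have := Finset.card_lt_card hss
      simpa using this
    apply Nat.find_min hPex hcard
    refine ⟨fun i => v ((s.orderIsoOfFin rfl i : Fin (Nat.find hPex))), ?_⟩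
    have hrange : Set.range (fun i => v ((s.orderIsoOfFin rfl i : Fin (Nat.find hPex))))
        = v '' ↑s := by
      ext z
      constructor
      · rintro ⟨i, rfl⟩
        exact ⟨_, (s.orderIsoOfFin rfl i).2, rfl⟩
      · rintro ⟨l, hl, rfl⟩
        exact ⟨(s.orderIsoOfFin rfl).symm ⟨l, hl⟩, by simp⟩
    rw [hrange]
    exact hs
  exact Module.Free.of_basis (Module.Basis.mk (key _ v hv hmin) hv.ge)
end

section
/- For all i, j ∈ ℕ and every prime p, if C(i+j, i) ≢ 0 (mod p) then the identity Σ_{k₁+⋯+k_e = k} C(i+k₁,i)⋯C(i+k_e,i) gives the leading coefficient e·C(i+k,i) for the term with exactly one kₛ = k; in particular, in the polynomial ring F[d^(i)t : i ∈ ℕ] over a field F of characteristic p, the operator d^(k) defined on generators by d^(k)(d^(i)t) = C(i+k,i)·d^(i+k)t and extended by the Leibniz-type rule d^(k)(xy) = Σ_{a+b=k} d^(a)(x)d^(b)(y) satisfies: d^(k)((d^(i)t)^e) = 0 whenever p ∣ e and p ∤ k, and d^(k)((d^(i)t)^e) = (d^(k/p)((d^(i)t)^{e/p}))^p whenever p ∣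 e and p ∣ k. -/
open MvPolynomial

/-- The multinomial expansion `d^{(k)}((d^{(i)}t)^e) = Σ_{k₁+⋯+k_e=k} ∏ₛ C(i+kₛ,i) ·
∏ₛ d^{(i+kₛ)}t` of the universal iterative derivation applied to a power of a variable,
in the polynomial ring `F[d^{(i)}t : i ∈ ℕ]` (the variable `n` stands for `d^{(n)}t`). -/
noncomputable def dPow (F : Type*) [Field F] (i e k : ℕ) : MvPolynomial ℕ F :=
  ∑ κ ∈ Finset.univ.filter (fun κ : Fin e → Fin (k + 1) => (∑ s, ((κ s : ℕ))) = k),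
    ∏ s, (MvPolynomial.C (((i + (κ s : ℕ)).choose i : F)) *
      MvPolynomial.X (i + (κ s : ℕ)))


section Aux

open Finset
open Fin.NatCast

variable {F : Type*} [Field F]

lemma prod_monomial {ι : Type*} (s : Finset ι) (d : ι → (ℕ →₀ ℕ)) (c : ι → F) :
    ∏ x ∈ s, MvPolynomial.monomial (d x) (c x) =
      MvPolynomial.monomial (∑ x ∈ s, d x) (∏ x ∈ s, c x) := by
  induction s using Finset.cons_induction with
  | empty => simp [MvPolynomial.monomial_zero']
  | cons a s ha ih => simp [Finset.prod_cons, Finset.sum_cons, ih, MvPolynomial.monomial_mul]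

noncomputable def avar (F : Type*) [Field F] (i j : ℕ) : MvPolynomial ℕ F :=
  MvPolynomial.C (((i + j).choose i : F)) * MvPolynomial.X (i + j)

noncomputable def fpoly (F : Type*) [Field F] (i N : ℕ) : Polynomial (MvPolynomial ℕ F) :=
  ∑ j ∈ Finset.range (N + 1), Polynomial.C (avar F i j) * Polynomial.X ^ j

lemma coeff_fpoly (i N m : ℕ) :
    (fpoly F i N).coeff m = if m ≤ N then avar F i m else 0 := by
  rw [fpoly, Polynomial.finset_sum_coeff]
  simp only [Polynomial.coeff_C_mul, Polynomial.coeff_X_pow, mul_ite, mul_one, mul_zero]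
  rw [Finset.sum_ite_eq (Finset.range (N + 1)) m (fun j => avar F i j)]
  simp [Nat.lt_succ_iff]

lemma coeff_fpoly_pow (i N e j : ℕ) (hj : j ≤ N) :
    ((fpoly F i N) ^ e).coeff j = dPow F i e j := by
  have h1 : ((fpoly F i N) ^ e).coeff j
      = PowerSeries.coeff j (((fpoly F i N : PowerSeries (MvPolynomial ℕ F))) ^ e) := by
    rw [← Polynomial.coe_pow, Polynomial.coeff_coe]
  rw [h1, PowerSeries.coeff_pow, dPow]
  have hle : ∀ l ∈ (Finset.range e).finsuppAntidiag j, ∀ n ∈ Finset.range e, l n ≤ j := by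
    intro l hl n hn
    rw [Finset.mem_finsuppAntidiag] at hl
    exact hl.1 ▸ Finset.single_le_sum (fun _ _ => Nat.zero_le _) hn
  refine Finset.sum_nbij' (i := fun l => fun s : Fin e => ((l (s : ℕ) : ℕ) : Fin (j + 1)))
    (j := fun κ => Finsupp.onFinset (Finset.range e)
      (fun n => if h : n < e then ((κ ⟨n, h⟩ : ℕ)) else 0)
      (fun n hn => Finset.mem_range.mpr (by by_contra hc; exact hn (by simp [hc]))))
    ?_ ?_ ?_ ?_ ?_
  · intro l hl
    have hmem := (Finset.mem_finsuppAntidiag).mp hl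
    simp only [Finset.mem_filter, Finset.mem_univ, true_and]
    have : ∀ s : Fin e, (((l (s : ℕ) : ℕ) : Fin (j + 1)) : ℕ) = l (s : ℕ) := by
      intro s
      exact Fin.val_cast_of_lt (Nat.lt_succ_of_le (hle l hl _ (Finset.mem_range.mpr s.2)))
    rw [Finset.sum_congr rfl fun s _ => this s]
    rw [Fin.sum_univ_eq_sum_range (fun n => l n) e]
    exact hmem.1
  · intro κ hκ
    simp only [Finset.mem_filter, Finset.mem_univ, true_and] at hκ
    rw [Finset.mem_finsuppAntidiag]
    refine ⟨?_, Finsupp.support_onFinset_subset⟩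
    change ∑ n ∈ Finset.range e, (if h : n < e then ((κ ⟨n, h⟩ : ℕ)) else 0) = j
    rw [← Fin.sum_univ_eq_sum_range (fun n => if h : n < e then ((κ ⟨n, h⟩ : ℕ)) else 0) e]
    rw [Finset.sum_congr rfl (fun (s : Fin e) _ => show (if h : (s : ℕ) < e then ((κ ⟨(s : ℕ), h⟩ : ℕ)) else 0) = ((κ s : ℕ)) by simp [s.2])]
    exact hκ
  · intro l hl
    ext n
    rw [Finsupp.onFinset_apply]
    by_cases hn : n < e
    · rw [dif_pos hn]
      exact Fin.val_cast_of_lt (Nat.lt_succ_of_le (hle l hl n (Finset.mem_range.mpr hn)))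
    · rw [dif_neg hn]
      have hmem := (Finset.mem_finsuppAntidiag).mp hl
      by_contra hc
      have := hmem.2 (Finsupp.mem_support_iff.mpr (Ne.symm hc))
      exact hn (Finset.mem_range.mp this)
  · intro κ hκ
    funext s
    simp only [Finsupp.onFinset_apply, dif_pos s.2]
    exact Fin.cast_val_eq_self (κ s)
  · intro l hl
    rw [← Fin.prod_univ_eq_prod_range (fun n => PowerSeries.coeff (l n) (fpoly F i N : PowerSeries (MvPolynomial ℕ F))) e]
    refine Finset.prod_congr rfl fun s _ => ?_
    have hls : l (s : ℕ) ≤ j := hle l hl _ (Finset.mem_range.mpr s.2)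
    rw [Polynomial.coeff_coe, coeff_fpoly, if_pos (le_trans hls hj)]
    rw [Fin.val_cast_of_lt (Nat.lt_succ_of_le hls)]
    rfl

lemma part1 (i e k : ℕ) (he : 1 ≤ e) (hk : 1 ≤ k) :
    MvPolynomial.coeff (Finsupp.single (i + k) 1 + Finsupp.single i (e - 1))
      (dPow F i e k) = (e : F) * (((i + k).choose i : F)) := by
  set T : ℕ →₀ ℕ := Finsupp.single (i + k) 1 + Finsupp.single i (e - 1) with hT
  have hkk : k < k + 1 := Nat.lt_succ_self k
  set δ : Fin e → (Fin e → Fin (k + 1)) :=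
    fun t s => if s = t then ⟨k, hkk⟩ else ⟨0, Nat.succ_pos k⟩ with hδ
  have hterm : ∀ κ : Fin e → Fin (k + 1),
      (∏ s, (MvPolynomial.C (((i + (κ s : ℕ)).choose i : F)) *
        MvPolynomial.X (i + (κ s : ℕ)))) =
      MvPolynomial.monomial (∑ s, Finsupp.single (i + (κ s : ℕ)) 1)
        (∏ s, (((i + (κ s : ℕ)).choose i : F))) := by
    intro κ
    rw [← prod_monomial]
    exact Finset.prod_congr rfl fun s _ => by rw [MvPolynomial.C_mul_X_eq_monomial]
  rw [dPow, MvPolynomial.coeff_sum]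
  simp only [hterm, MvPolynomial.coeff_monomial]
  rw [← Finset.sum_filter, Finset.filter_filter]
  have hset : (univ.filter (fun κ : Fin e → Fin (k+1) =>
        (∑ s, ((κ s : ℕ))) = k ∧ (∑ s, Finsupp.single (i + ((κ s : ℕ))) 1) = T)) =
      Finset.image δ univ := by
    ext κ
    simp only [mem_filter, mem_univ, true_and, mem_image]
    constructor
    · rintro ⟨h1, h2⟩
      have hik : i + k ≠ i := by omega
      have hcount : (univ.filter fun s : Fin e => i + ((κ s : ℕ)) = i + k).card = 1 := by
        have h3 := DFunLike.congr_fun h2 (i + k)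
        rw [Finsupp.finset_sum_apply] at h3
        simp only [Finsupp.single_apply, Finsupp.add_apply] at h3
        rw [Finset.card_filter]
        rw [h3]
        rw [hT]
        simp [Finsupp.single_apply, Ne.symm hik, show k ≠ 0 by omega]
      obtain ⟨t, ht⟩ := Finset.card_eq_one.mp hcount
      have htk : ((κ t : ℕ)) = k := by
        have : t ∈ univ.filter fun s : Fin e => i + ((κ s : ℕ)) = i + k := ht ▸ mem_singleton_self t
        simp at this; omega
      refine ⟨t, ?_⟩
      funext s
      by_cases hs : s = t
      · subst hs; simp only [hδ, if_pos rfl]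
        apply Fin.ext; simpa using htk.symm
      · have hzero : ((κ s : ℕ)) = 0 := by
          have hsum : (∑ s', ((κ s' : ℕ))) = ((κ t : ℕ)) + ∑ s' ∈ univ.erase t, ((κ s' : ℕ)) :=
            (Finset.add_sum_erase _ _ (mem_univ t)).symm
          rw [h1, htk] at hsum
          have : ∑ s' ∈ univ.erase t, ((κ s' : ℕ)) = 0 := by omega
          have := Finset.sum_eq_zero_iff.mp this s (by simp [hs])
          exact this
        simp only [hδ, if_neg hs]
        apply Fin.ext; simpa using hzero.symm
    · rintro ⟨t, rfl⟩
      constructor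
      · simp only [hδ, apply_ite (Fin.val)]
        rw [Finset.sum_ite_eq' univ t]
        simp
      · rw [← Finset.add_sum_erase _ _ (mem_univ t)]
        simp only [hδ, if_pos rfl]
        have : ∀ s ∈ univ.erase t, Finsupp.single (i + (((if s = t then (⟨k, hkk⟩ : Fin (k+1)) else ⟨0, Nat.succ_pos k⟩) : Fin (k+1)) : ℕ)) 1 = Finsupp.single i 1 := by
          intro s hs
          rw [if_neg (Finset.ne_of_mem_erase hs)]
          simp
        rw [Finset.sum_congr rfl this, Finset.sum_const, Finset.card_erase_of_mem (mem_univ t)]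
        rw [card_univ, Fintype.card_fin]
        rw [hT]
        congr 1
        rw [Finsupp.smul_single]
        simp
  rw [hset, Finset.sum_image]
  · have hval : ∀ t : Fin e,
        (∏ s, (((i + ((δ t s : ℕ))).choose i : F))) = (((i + k).choose i : F)) := by
      intro t
      have : ∀ s : Fin e, (((i + ((δ t s : ℕ))).choose i : F)) =
          if s = t then (((i + k).choose i : F)) else 1 := by
        intro s
        by_cases hs : s = t <;> simp [hδ, hs]
      rw [Finset.prod_congr rfl (fun s _ => this s), Finset.prod_ite_eq' univ t]
      simp
    rw [Finset.sum_congr rfl (fun t _ => hval t), Finset.sum_const, card_univ, Fintype.card_fin,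
      nsmul_eq_mul]
  · intro a _ b _ hab
    by_contra hne
    have := congrFun hab a
    simp only [hδ, if_pos rfl, if_neg hne] at this
    have := congrArg Fin.val this
    simp at this
    omega

lemma dPow_eq_frobenius (p : ℕ) [CharP F p] (hp : p.Prime) (i e k : ℕ) (he : p ∣ e) :
    dPow F i e k =
      (if p ∣ k then ((fpoly F i k) ^ (e / p)).coeff (k / p) else 0) ^ p := by
  haveI : ExpChar (MvPolynomial ℕ F) p := ExpChar.prime hp
  obtain ⟨m, rfl⟩ := he
  rw [Nat.mul_div_cancel_left m hp.pos]
  rw [← coeff_fpoly_pow i k (p * m) k le_rfl]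
  rw [mul_comm p m, pow_mul, ← Polynomial.map_frobenius_expand, Polynomial.coeff_map,
    Polynomial.coeff_expand hp.pos, frobenius_def]

lemma part2 (p : ℕ) [CharP F p] (hp : p.Prime) (i e k : ℕ) (he : p ∣ e) (hk : ¬ p ∣ k) :
    dPow F i e k = 0 := by
  rw [dPow_eq_frobenius p hp i e k he, if_neg hk, zero_pow hp.ne_zero]

lemma part3 (p : ℕ) [CharP F p] (hp : p.Prime) (i e k : ℕ) (he : p ∣ e) (hk : p ∣ k) :
    dPow F i e k = (dPow F i (e / p) (k / p)) ^ p := by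
  rw [dPow_eq_frobenius p hp i e k he, if_pos hk,
    coeff_fpoly_pow i k (e / p) (k / p) (Nat.div_le_self k p)]

end Aux

/-- In characteristic `p`: the term of `d^{(k)}((d^{(i)}t)^e)` with
exactly one `kₛ = k` has coefficient `e·C(i+k,i)`; moreover
`d^{(k)}((d^{(i)}t)^e) = 0` whenever `p ∣ e` and `p ∤ k`, and
`d^{(k)}((d^{(i)}t)^e) = (d^{(k/p)}((d^{(i)}t)^{e/p}))^p` whenever `p ∣ e` and
`p ∣ k`. -/
theorem dPow_properties (F : Type*) [Field F] (p : ℕ) [CharP F p] (hp : p.Prime) :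
    (∀ i e k : ℕ, 1 ≤ e → 1 ≤ k →
      MvPolynomial.coeff (Finsupp.single (i + k) 1 + Finsupp.single i (e - 1))
          (dPow F i e k) = (e : F) * (((i + k).choose i : F))) ∧
    (∀ i e k : ℕ, p ∣ e → ¬ p ∣ k → dPow F i e k = 0) ∧
    (∀ i e k : ℕ, p ∣ e → p ∣ k → dPow F i e k = (dPow F i (e / p) (k / p)) ^ p) := by
  exact ⟨fun i e k he hk => part1 i e k he hk,
    fun i e k he hk => part2 p hp i e k he hk,
    fun i e k he hk => part3 p hp i e k he hk⟩
end

section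
/- Let F be a field of characteristic p > 0 and D : F → F an additive map satisfying D(xy) = xD(y) + D(x)y and ker(D) = F^p. If E/F is a field extension and D extends to a derivation D_E : E → E, then E/F is separable (every element of E algebraic over F is separable over F). -/
/-- Let `F` be a field of characteristic `p > 0` and `D : F → F` an
additive map with `D(xy) = xD(y) + D(x)y` and `ker D = F^p`. If `E/F` is a field
extension and `D` extends to a derivation `D_E : E → E`, then `E/F` is separable: every
element of `E` algebraic over `F` is separable over `F`. -/
theorem separable_of_derivation_with_kernel_Fp {F E : Type*} [Field F] [Field E]
    [Algebra F E] (p : ℕ) [CharP F p] (hp : p.Prime)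
    (D : F → F)
    (hDadd : ∀ x y : F, D (x + y) = D x + D y)
    (hDleib : ∀ x y : F, D (x * y) = x * D y + D x * y)
    (hker : ∀ x : F, D x = 0 ↔ ∃ y : F, y ^ p = x)
    (DE : E → E)
    (hEadd : ∀ x y : E, DE (x + y) = DE x + DE y)
    (hEleib : ∀ x y : E, DE (x * y) = x * DE y + DE x * y)
    (hext : ∀ x : F, DE (algebraMap F E x) = algebraMap F E (D x)) :
    ∀ e : E, IsIntegral F e → IsSeparable F e := by
  classical
  haveI : Fact p.Prime := ⟨hp⟩
  haveI : CharP E p := charP_of_injective_algebraMap (algebraMap F E).injective p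
  intro e he
  by_contra hsep
  set f := minpoly F e with hfdef
  have hirr : Irreducible f := minpoly.irreducible he
  have hder : Polynomial.derivative f = 0 := by
    by_contra h
    exact hsep ((Polynomial.separable_iff_derivative_ne_zero hirr).2 h)
  set g := Polynomial.contract p f with hgdef
  have hfg : Polynomial.expand F p g = f := Polynomial.expand_contract p hder hp.ne_zero
  -- basic facts about D and DE
  have hD0 : D 0 = 0 := by
    have := hDadd 0 0; rw [add_zero] at this; exact (left_eq_add.mp this).symm ▸ rfl
  have hD1 : D 1 = 0 := by
    have := hDleib 1 1
    rw [mul_one, one_mul, mul_one] at this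
    exact (left_eq_add.mp this)
  -- DE as an additive monoid hom
  let DEh : E →+ E := AddMonoidHom.mk' DE hEadd
  have hDE0 : DE 0 = 0 := DEh.map_zero
  have hDE1 : DE 1 = 0 := by
    have := hEleib 1 1
    rw [mul_one, one_mul, mul_one] at this
    exact (left_eq_add.mp this)
  have hDEpow : ∀ (x : E) (n : ℕ), DE (x ^ (n + 1)) = (n + 1 : ℕ) * x ^ n * DE x := by
    intro x n
    induction n with
    | zero => simp [hEleib]
    | succ k ih =>
      have : x ^ (k + 1 + 1) = x * x ^ (k + 1) := by ring
      rw [this, hEleib, ih]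
      push_cast
      ring
  have hDEep : DE (e ^ p) = 0 := by
    obtain ⟨k, hk⟩ : ∃ k, p = k + 1 := ⟨p - 1, (Nat.succ_pred_eq_of_pos hp.pos).symm⟩
    rw [hk, hDEpow]
    have : ((k + 1 : ℕ) : E) = 0 := by rw [← hk]; exact CharP.cast_eq_zero E p
    rw [this, zero_mul, zero_mul]
  have hDEepi : ∀ i : ℕ, DE ((e ^ p) ^ i) = 0 := by
    intro i
    cases i with
    | zero => simpa using hDE1
    | succ k => rw [hDEpow, hDEep, mul_zero]
  -- aeval (e^p) g = 0
  have hg0 : Polynomial.aeval (e ^ p) g = 0 := by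
    have : Polynomial.aeval e f = 0 := minpoly.aeval F e
    rwa [← hfg, Polynomial.expand_aeval] at this
  -- the "derived" polynomial
  set g' : Polynomial F := ∑ i ∈ g.support, Polynomial.monomial i (D (g.coeff i)) with hg'def
  have hg'coeff : ∀ j : ℕ, g'.coeff j = D (g.coeff j) := by
    intro j
    rw [hg'def, Polynomial.finset_sum_coeff]
    simp only [Polynomial.coeff_monomial]
    rw [Finset.sum_ite_eq' g.support j (fun i => D (g.coeff i))]
    by_cases hj : j ∈ g.support
    · simp [hj]
    · simp [hj, Polynomial.notMem_support_iff.mp hj, hD0]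
  -- aeval (e^p) g' = 0 by applying DE
  have hg'0 : Polynomial.aeval (e ^ p) g' = 0 := by
    have hsum : Polynomial.aeval (e ^ p) g =
        ∑ i ∈ g.support, algebraMap F E (g.coeff i) * (e ^ p) ^ i := by
      conv_lhs => rw [g.as_sum_support]
      rw [map_sum]
      refine Finset.sum_congr rfl fun i _ => ?_
      rw [Polynomial.aeval_monomial]
    have hDEsum : DE (Polynomial.aeval (e ^ p) g) =
        ∑ i ∈ g.support, algebraMap F E (D (g.coeff i)) * (e ^ p) ^ i := by
      rw [hsum]
      rw [show DE (∑ i ∈ g.support, algebraMap F E (g.coeff i) * (e ^ p) ^ i) =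
          DEh (∑ i ∈ g.support, algebraMap F E (g.coeff i) * (e ^ p) ^ i) from rfl]
      rw [map_sum]
      refine Finset.sum_congr rfl fun i _ => ?_
      show DE (algebraMap F E (g.coeff i) * (e ^ p) ^ i) = _
      rw [hEleib, hDEepi, mul_zero, zero_add, hext]
    rw [hg0, hDE0] at hDEsum
    have : Polynomial.aeval (e ^ p) g' =
        ∑ i ∈ g.support, algebraMap F E (D (g.coeff i)) * (e ^ p) ^ i := by
      rw [hg'def, map_sum]
      refine Finset.sum_congr rfl fun i _ => ?_
      rw [Polynomial.aeval_monomial]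
    rw [this, ← hDEsum]
  -- g' = 0 by minimality
  have hg'zero : g' = 0 := by
    by_contra hne
    have hqne : Polynomial.expand F p g' ≠ 0 := fun h => hne (by
      simpa [Polynomial.expand_eq_zero hp.pos] using h)
    have hqaeval : Polynomial.aeval e (Polynomial.expand F p g') = 0 := by
      rw [Polynomial.expand_aeval, hg'0]
    have hle : f.degree ≤ (Polynomial.expand F p g').degree :=
      minpoly.degree_le_of_ne_zero F e hqne hqaeval
    -- but degree (expand p g') < degree f
    have hgne : g ≠ 0 := by
      intro h
      have : f = 0 := by rw [← hfg, h, map_zero]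
      exact (minpoly.ne_zero he) this
    have hfne : f ≠ 0 := minpoly.ne_zero he
    have hgmonic : g.leadingCoeff = 1 := by
      have := Polynomial.leadingCoeff_expand (f := g) hp.pos (R := F)
      rw [hfg] at this
      rw [← this]
      exact minpoly.monic he
    have hgdeg : 1 ≤ g.natDegree := by
      have h1 : 0 < f.natDegree := minpoly.natDegree_pos he
      have h2 : f.natDegree = g.natDegree * p := by
        rw [← hfg, Polynomial.natDegree_expand]
      by_contra h
      push_neg at h
      have h3 : g.natDegree = 0 := by omega
      rw [h3, zero_mul] at h2
      omega
    have hcoeffzero : ∀ j, g.natDegree ≤ j → g'.coeff j = 0 := by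
      intro j hj
      rcases eq_or_lt_of_le hj with hj' | hj'
      · rw [hg'coeff, ← hj']
        show D g.leadingCoeff = 0
        rw [hgmonic]; exact hD1
      · rw [hg'coeff, Polynomial.coeff_eq_zero_of_natDegree_lt hj', hD0]
    have hg'deg : g'.natDegree < g.natDegree := by
      by_contra h
      push_neg at h
      exact (Polynomial.leadingCoeff_ne_zero.mpr hne) (hcoeffzero _ h)
    have hqdeg : (Polynomial.expand F p g').natDegree < f.natDegree := by
      rw [Polynomial.natDegree_expand, ← hfg, Polynomial.natDegree_expand]
      exact (Nat.mul_lt_mul_right hp.pos).mpr hg'deg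
    have : (Polynomial.expand F p g').degree < f.degree := by
      rw [Polynomial.degree_eq_natDegree hqne, Polynomial.degree_eq_natDegree hfne]
      exact_mod_cast hqdeg
    exact absurd hle (not_le.mpr this)
  -- all coefficients of g are p-th powers
  have hpow : ∀ i : ℕ, ∃ b : F, b ^ p = g.coeff i := by
    intro i
    have : D (g.coeff i) = 0 := by rw [← hg'coeff, hg'zero, Polynomial.coeff_zero]
    exact (hker _).mp this
  choose b hb using hpow
  -- f = r ^ p, contradiction with irreducibility
  set r : Polynomial F := ∑ i ∈ g.support, Polynomial.monomial i (b i) with hrdef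
  have hmapr : r.map (frobenius F p) = g := by
    rw [hrdef, Polynomial.map_sum]
    conv_rhs => rw [g.as_sum_support]
    refine Finset.sum_congr rfl fun i _ => ?_
    rw [Polynomial.map_monomial]
    congr 1
    exact hb i
  have hfrp : f = r ^ p := by
    rw [← hfg, ← hmapr, ← Polynomial.map_expand, Polynomial.map_frobenius_expand]
  have hru : IsUnit r := by
    have h2 : f = r * r ^ (p - 1) := by
      rw [hfrp, ← pow_succ']
      congr 1
      have := hp.two_le
      omega
    rcases hirr.isUnit_or_isUnit h2 with h | h
    · exact h
    · exact (isUnit_pow_iff (Nat.sub_ne_zero_of_lt hp.one_lt)).mp h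
  exact hirr.not_isUnit (hfrp ▸ hru.pow p)
end
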